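/- arXiv:0707.2421 — 2 statements merged into one kernel-verified Lean document; each statement's English description precedes it below -/
import Mathlib

section
/- Let P be a two-color grid poset that decomposes as P = P1 ◁ P2 ◁ ... ◁ Pk, and let M be a 2×2 integer matrix with rows M_α and M_β. If for each i = 1,...,k the edge-colored lattice J_color(P_i) satisfies the structure condition for M, then J_color(P) satisfies the structure condition for M. -/
/-- The two colors (simple-root labels) `α` and `β`. -/
inductive TwoColor : Type
  | alpha : TwoColor
  | beta : TwoColor
  deriving DecidableEq

/-- Lengths of paths of `r`-edges ending at `t`. -/
def chainsEndingAt {V : Type*} (r : V → V → Prop) (t : V) : Set ℕ :=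
  {n : ℕ | ∃ c : ℕ → V, c n = t ∧ ∀ i : ℕ, i < n → r (c i) (c (i + 1))}

/-- Lengths of paths of `r`-edges starting at `t`. -/
def chainsStartingAt {V : Type*} (r : V → V → Prop) (t : V) : Set ℕ :=
  {n : ℕ | ∃ c : ℕ → V, c 0 = t ∧ ∀ i : ℕ, i < n → r (c i) (c (i + 1))}

/-- `ρ`: the maximum number of edges in a chain of `r`-edges ending at `t`. -/
noncomputable def rhoOf {V : Type*} (r : V → V → Prop) (t : V) : ℕ :=
  sSup (chainsEndingAt r t)

/-- `δ`: the maximum number of edges in a chain of `r`-edges starting at `t`. -/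
noncomputable def deltaOf {V : Type*} (r : V → V → Prop) (t : V) : ℕ :=
  sSup (chainsStartingAt r t)

/-- `l = ρ + δ`. -/
noncomputable def lenOf {V : Type*} (r : V → V → Prop) (t : V) : ℕ :=
  rhoOf r t + deltaOf r t

/-- The weight `wt(t) = (ρ_α(t) − δ_α(t), ρ_β(t) − δ_β(t))` of an element of an
edge-colored poset whose (colored) covering relations are given by `cov`. -/
noncomputable def wtOf {V : Type*} (cov : TwoColor → V → V → Prop) (t : V) : ℤ × ℤ :=
  ((rhoOf (cov TwoColor.alpha) t : ℤ) - (deltaOf (cov TwoColor.alpha) t : ℤ),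
   (rhoOf (cov TwoColor.beta) t : ℤ) - (deltaOf (cov TwoColor.beta) t : ℤ))

/-- The structure condition for a `2 × 2` integer matrix `M` (given by its rows
`M γ` for `γ ∈ {α, β}`): along any covering edge of color `γ`, the weight changes by `M γ`. -/
def StructureCondition {V : Type*} (cov : TwoColor → V → V → Prop)
    (M : TwoColor → ℤ × ℤ) : Prop :=
  ∀ (γ : TwoColor) (s t : V), cov γ s t → wtOf cov t = wtOf cov s + M γ

/-- The elements of the distributive lattice `J(P)`: order ideals (lower sets) of `P`. -/
abbrev OrderIdeal (V : Type*) [PartialOrder V] : Type _ := {I : Set V // IsLowerSet I}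

/-- The colored covering relation of `J_color(P)` for a vertex-colored poset `P`:
`s ⋖ t` with color `γ` when `t ∖ s` is a single vertex of color `γ`. -/
def idealCov {V : Type*} [PartialOrder V] (vcolor : V → TwoColor) (γ : TwoColor)
    (s t : OrderIdeal V) : Prop :=
  ∃ u : V, vcolor u = γ ∧ u ∉ s.1 ∧ t.1 = insert u s.1

/-- Two vertices are in the same connected component of the Hasse diagram of a
poset when they are joined by a path of covering edges (in either direction). -/
def HasseConnected {V : Type*} [PartialOrder V] (u v : V) : Prop :=
  Relation.ReflTransGen (fun x y : V => x ⋖ y ∨ y ⋖ x) u v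

/-- `chain : P → {1, …, m}` is a chain function making the finite poset `P` a grid
poset: each fiber of `chain` is a chain of `P`, and along any covering relation
`u ⋖ v` either `chain u = chain v` or `chain u = chain v + 1`. -/
def IsGridPoset {V : Type*} [PartialOrder V] (m : ℕ) (chain : V → ℕ) : Prop :=
  1 ≤ m ∧ (∀ v : V, 1 ≤ chain v ∧ chain v ≤ m) ∧
    (∀ i : ℕ, IsChain (· ≤ ·) {v : V | chain v = i}) ∧
    (∀ u v : V, u ⋖ v → chain u = chain v ∨ chain u = chain v + 1)

/-- `color` is a two-color function for the grid poset `(P, chain)`: it is constant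
on the fibers of `chain`, and vertices in the same connected component of the Hasse
diagram lying on adjacent chains get different colors. -/
def IsTwoColoring {V : Type*} [PartialOrder V] (chain : V → ℕ) (color : V → TwoColor) : Prop :=
  (∀ u v : V, chain u = chain v → color u = color v) ∧
  (∀ u v : V, HasseConnected u v → chain u = chain v + 1 → color u ≠ color v)

/-- `idx` exhibits the decomposition `P = P₁ ◁ P₂ ◁ ⋯ ◁ P_k`, where
`P_i = idx⁻¹(i)`: each prefix is an order ideal of the remaining poset
(equivalently, `idx` is monotone), each piece is nonempty, and whenever `u` is a
maximal (resp. minimal) element of the piece `P_i` and `v` is a maximal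
(resp. minimal) element of the union of the later pieces, `chain u ≤ chain v`. -/
def IsDecomposition {V : Type*} [PartialOrder V] {k : ℕ} (chain : V → ℕ)
    (idx : V → Fin k) : Prop :=
  (∀ u v : V, u ≤ v → idx u ≤ idx v) ∧
  (∀ i : Fin k, ∃ v : V, idx v = i) ∧
  (∀ (i : Fin k) (u v : V), idx u = i → i < idx v →
      (∀ w : V, idx w = i → ¬u < w) → (∀ w : V, i < idx w → ¬v < w) → chain u ≤ chain v) ∧
  (∀ (i : Fin k) (u v : V), idx u = i → i < idx v →
      (∀ w : V, idx w = i → ¬w < u) → (∀ w : V, i < idx w → ¬w < v) → chain u ≤ chain v)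

/-- The restriction `s ∩ P_i` of an order ideal `s` of `P` to the piece
`P_i = idx⁻¹(i)`, as an order ideal of the subposet `P_i`. -/
def restrictIdeal {V : Type*} [PartialOrder V] {k : ℕ} (idx : V → Fin k)
    (s : OrderIdeal V) (i : Fin k) : OrderIdeal {v : V // idx v = i} :=
  ⟨{x : {v : V // idx v = i} | (x : V) ∈ s.1}, fun _ _ hba ha => s.2 hba ha⟩

/-- The restriction of the vertex coloring to the piece `P_i = idx⁻¹(i)`. -/
def subColor {V : Type*} {k : ℕ} (idx : V → Fin k) (color : V → TwoColor) (i : Fin k)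
    (x : {v : V // idx v = i}) : TwoColor :=
  color x.1

/-! ### Part 1: basic finite-poset lemmas -/
set_option linter.unusedSectionVars false

section Basics
variable {V : Type*} [PartialOrder V] [Finite V]

lemma exists_covby_le {u v : V} (h : u < v) : ∃ z, u ⋖ z ∧ z ≤ v := by
  obtain ⟨z, hz, hmin⟩ := wellFounded_lt.has_min {z | u < z ∧ z ≤ v} ⟨v, h, le_refl v⟩
  exact ⟨z, ⟨hz.1, fun w hw1 hw2 => hmin w ⟨hw1, hw2.le.trans hz.2⟩ hw2⟩, hz.2⟩

lemma exists_le_covby {u v : V} (h : u < v) : ∃ z, u ≤ z ∧ z ⋖ v := by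
  obtain ⟨z, hz, hmin⟩ := wellFounded_gt.has_min {z | u ≤ z ∧ z < v} ⟨u, le_refl u, h⟩
  exact ⟨z, hz.1, hz.2, fun w hw1 hw2 => hmin w ⟨hz.1.trans hw1.le, hw2⟩ hw1⟩

variable {m : ℕ} {chain : V → ℕ}

lemma chain_anti (hgrid : IsGridPoset m chain) : ∀ {u v : V}, u ≤ v → chain v ≤ chain u := by
  have H : ∀ u : V, ∀ v, u < v → chain v ≤ chain u := fun u =>
    wellFounded_gt.induction (C := fun u => ∀ v, u < v → chain v ≤ chain u) u
      (fun x ih v hv => by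
        obtain ⟨z, hz, hzv⟩ := exists_covby_le hv
        have h1 : chain z ≤ chain x := by rcases hgrid.2.2.2 x z hz with h | h <;> omega
        rcases eq_or_lt_of_le hzv with rfl | hlt
        · exact h1
        · exact le_trans (ih z hz.lt v hlt) h1)
  intro u v huv
  rcases eq_or_lt_of_le huv with rfl | h
  · exact le_refl _
  · exact H u v h

lemma fiber_comp (hgrid : IsGridPoset m chain) {u v : V} (h : chain u = chain v) :
    u ≤ v ∨ v ≤ u := by
  rcases eq_or_ne u v with rfl | hne
  · exact Or.inl (le_refl u)
  · exact hgrid.2.2.1 (chain v) h rfl hne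

lemma climbMax (hgrid : IsGridPoset m chain) (S : Set V)
    (hconv : ∀ ⦃a b c : V⦄, a ∈ S → c ∈ S → a ≤ b → b ≤ c → b ∈ S) :
    ∀ u, u ∈ S → ∃ a ∈ S, u ≤ a ∧ (∀ w ∈ S, ¬ a < w) ∧
      ∀ g, chain a ≤ g → g ≤ chain u → ∃ e ∈ S, u ≤ e ∧ chain e = g := fun u =>
  wellFounded_gt.induction (C := fun u => u ∈ S → ∃ a ∈ S, u ≤ a ∧ (∀ w ∈ S, ¬ a < w) ∧
      ∀ g, chain a ≤ g → g ≤ chain u → ∃ e ∈ S, u ≤ e ∧ chain e = g) u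
    (fun x ih hx => by
      by_cases hmax : ∀ w ∈ S, ¬ x < w
      · exact ⟨x, hx, le_refl x, hmax, fun g h1 h2 => ⟨x, hx, le_refl x, le_antisymm h1 h2⟩⟩
      · push_neg at hmax
        obtain ⟨w, hwS, hxw⟩ := hmax
        obtain ⟨z, hcov, hzw⟩ := exists_covby_le hxw
        have hzS : z ∈ S := hconv hx hwS hcov.le hzw
        obtain ⟨a, haS, hza, hamax, hIVT⟩ := ih z hcov.lt hzS
        refine ⟨a, haS, hcov.le.trans hza, hamax, fun g h1 h2 => ?_⟩
        rcases eq_or_lt_of_le h2 with rfl | h2'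
        · exact ⟨x, hx, le_refl x, rfl⟩
        · have hgz : g ≤ chain z := by rcases hgrid.2.2.2 x z hcov with h | h <;> omega
          obtain ⟨e, heS, hze, hce⟩ := hIVT g h1 hgz
          exact ⟨e, heS, hcov.le.trans hze, hce⟩)

lemma climbMin (hgrid : IsGridPoset m chain) (S : Set V)
    (hconv : ∀ ⦃a b c : V⦄, a ∈ S → c ∈ S → a ≤ b → b ≤ c → b ∈ S) :
    ∀ u, u ∈ S → ∃ a ∈ S, a ≤ u ∧ (∀ w ∈ S, ¬ w < a) ∧
      ∀ g, chain u ≤ g → g ≤ chain a → ∃ e ∈ S, e ≤ u ∧ chain e = g := fun u =>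
  wellFounded_lt.induction (C := fun u => u ∈ S → ∃ a ∈ S, a ≤ u ∧ (∀ w ∈ S, ¬ w < a) ∧
      ∀ g, chain u ≤ g → g ≤ chain a → ∃ e ∈ S, e ≤ u ∧ chain e = g) u
    (fun x ih hx => by
      by_cases hmin : ∀ w ∈ S, ¬ w < x
      · exact ⟨x, hx, le_refl x, hmin, fun g h1 h2 => ⟨x, hx, le_refl x, le_antisymm h1 h2⟩⟩
      · push_neg at hmin
        obtain ⟨w, hwS, hxw⟩ := hmin
        obtain ⟨z, hwz, hcov⟩ := exists_le_covby hxw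
        have hzS : z ∈ S := hconv hwS hx hwz hcov.le
        obtain ⟨a, haS, hza, hamin, hIVT⟩ := ih z hcov.lt hzS
        refine ⟨a, haS, hza.trans hcov.le, hamin, fun g h1 h2 => ?_⟩
        rcases eq_or_lt_of_le h1 with rfl | h1'
        · exact ⟨x, hx, le_refl x, rfl⟩
        · have hgz : chain z ≤ g := by rcases hgrid.2.2.2 z x hcov with h | h <;> omega
          obtain ⟨e, heS, hze, hce⟩ := hIVT g hgz h2
          exact ⟨e, heS, hze.trans hcov.le, hce⟩)

end Basics

/-! ### Part 2: chains in the ideal lattice -/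

section Lattice
variable {V : Type*} [PartialOrder V] [Fintype V] {color : V → TwoColor} {γ : TwoColor}

lemma idealCov_ssubset {s t : OrderIdeal V} (h : idealCov color γ s t) : s.1 ⊂ t.1 := by
  obtain ⟨u, _, hus, ht⟩ := h
  rw [ht]
  exact Set.ssubset_insert hus

lemma chainsEndingAt_bdd (t : OrderIdeal V) :
    BddAbove (chainsEndingAt (idealCov color γ) t) := by
  refine ⟨Fintype.card V, fun n hn => ?_⟩
  obtain ⟨c, hcn, hstep⟩ := hn
  have mono : ∀ i ≤ n, i ≤ ((c i).1).ncard := by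
    intro i
    induction i with
    | zero => simp
    | succ j ihj =>
      intro hj
      have h1 := ihj (by omega)
      have h2 : ((c j).1).ncard < ((c (j + 1)).1).ncard :=
        Set.ncard_lt_ncard (idealCov_ssubset (hstep j (by omega))) (Set.toFinite _)
      omega
  have h3 := mono n le_rfl
  have h4 : ((c n).1).ncard ≤ Fintype.card V := by
    have := Set.ncard_le_ncard (Set.subset_univ (c n).1) (Set.toFinite _)
    simpa [Set.ncard_univ] using this
  omega

lemma chainsStartingAt_bdd (t : OrderIdeal V) :
    BddAbove (chainsStartingAt (idealCov color γ) t) := by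
  refine ⟨Fintype.card V, fun n hn => ?_⟩
  obtain ⟨c, hc0, hstep⟩ := hn
  have mono : ∀ i ≤ n, i ≤ ((c i).1).ncard := by
    intro i
    induction i with
    | zero => simp
    | succ j ihj =>
      intro hj
      have h1 := ihj (by omega)
      have h2 : ((c j).1).ncard < ((c (j + 1)).1).ncard :=
        Set.ncard_lt_ncard (idealCov_ssubset (hstep j (by omega))) (Set.toFinite _)
      omega
  have h3 := mono n le_rfl
  have h4 : ((c n).1).ncard ≤ Fintype.card V := by
    have := Set.ncard_le_ncard (Set.subset_univ (c n).1) (Set.toFinite _)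
    simpa [Set.ncard_univ] using this
  omega

lemma zero_mem_end {r : OrderIdeal V → OrderIdeal V → Prop} (t : OrderIdeal V) :
    0 ∈ chainsEndingAt r t := ⟨fun _ => t, rfl, fun i hi => absurd hi (by omega)⟩

lemma zero_mem_start {r : OrderIdeal V → OrderIdeal V → Prop} (t : OrderIdeal V) :
    0 ∈ chainsStartingAt r t := ⟨fun _ => t, rfl, fun i hi => absurd hi (by omega)⟩

lemma rho_ge_succ {s t : OrderIdeal V} (h : idealCov color γ s t) :
    rhoOf (idealCov color γ) s + 1 ≤ rhoOf (idealCov color γ) t := by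
  set n := rhoOf (idealCov color γ) s with hn
  have hmem : n ∈ chainsEndingAt (idealCov color γ) s :=
    Nat.sSup_mem ⟨0, zero_mem_end s⟩ (chainsEndingAt_bdd s)
  obtain ⟨c, hcn, hstep⟩ := hmem
  have hmem2 : n + 1 ∈ chainsEndingAt (idealCov color γ) t := by
    refine ⟨fun i => if i ≤ n then c i else t, by simp, fun i hi => ?_⟩
    rcases Nat.lt_or_ge i n with hin | hin
    · simp only [if_pos (by omega : i ≤ n), if_pos (by omega : i + 1 ≤ n)]
      exact hstep i hin
    · have hieq : i = n := by omega
      rw [hieq]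
      simp only [if_pos le_rfl, if_neg (by omega : ¬ n + 1 ≤ n), hcn]
      exact h
  exact le_csSup (chainsEndingAt_bdd t) hmem2

lemma delta_ge_succ {s t : OrderIdeal V} (h : idealCov color γ s t) :
    deltaOf (idealCov color γ) t + 1 ≤ deltaOf (idealCov color γ) s := by
  set n := deltaOf (idealCov color γ) t with hn
  have hmem : n ∈ chainsStartingAt (idealCov color γ) t :=
    Nat.sSup_mem ⟨0, zero_mem_start t⟩ (chainsStartingAt_bdd t)
  obtain ⟨c, hc0, hstep⟩ := hmem
  have hmem2 : n + 1 ∈ chainsStartingAt (idealCov color γ) s := by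
    refine ⟨fun i => Nat.rec s (fun j _ => c j) i, rfl, fun i hi => ?_⟩
    match i with
    | 0 => simpa [hc0] using h
    | (j + 1) => exact hstep j (by omega)
  exact le_csSup (chainsStartingAt_bdd s) hmem2

lemma end_pop {t : OrderIdeal V} {n : ℕ}
    (hn : n + 1 ∈ chainsEndingAt (idealCov color γ) t) :
    ∃ s, idealCov color γ s t ∧ n ∈ chainsEndingAt (idealCov color γ) s := by
  obtain ⟨c, hc, hstep⟩ := hn
  exact ⟨c n, hc ▸ hstep n (by omega), ⟨c, rfl, fun i hi => hstep i (by omega)⟩⟩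

lemma start_pop {t : OrderIdeal V} {n : ℕ}
    (hn : n + 1 ∈ chainsStartingAt (idealCov color γ) t) :
    ∃ w, idealCov color γ t w ∧ n ∈ chainsStartingAt (idealCov color γ) w := by
  obtain ⟨c, hc, hstep⟩ := hn
  exact ⟨c 1, hc ▸ hstep 0 (by omega), ⟨fun i => c (i + 1), rfl, fun i hi => hstep (i + 1) (by omega)⟩⟩

end Lattice

/-! ### Part 3: closed formulas for rho and delta in a two-color grid poset -/

def FreeSet {V : Type*} [PartialOrder V] (chain : V → ℕ) (color : V → TwoColor)
    (γ : TwoColor) (s : OrderIdeal V) : Set V :=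
  {u | u ∈ s.1 ∧ color u = γ ∧ ∀ x ∈ s.1, u < x → chain x = chain u}

def CoFreeSet {V : Type*} [PartialOrder V] (chain : V → ℕ) (color : V → TwoColor)
    (γ : TwoColor) (s : OrderIdeal V) : Set V :=
  {u | u ∉ s.1 ∧ color u = γ ∧ ∀ x, x ∉ s.1 → x < u → chain x = chain u}

section Formula
variable {V : Type*} [PartialOrder V] [Fintype V] {m : ℕ} {chain : V → ℕ}
  {color : V → TwoColor} (hgrid : IsGridPoset m chain) (hcolor : IsTwoColoring chain color)
  (γ : TwoColor)

include hgrid hcolor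

theorem rho_eq_free (s : OrderIdeal V) :
    rhoOf (idealCov color γ) s = (FreeSet chain color γ s).ncard := by
  apply le_antisymm
  · -- every chain length ≤ ncard FreeSet
    have key : ∀ n : ℕ, ∀ s : OrderIdeal V,
        n ∈ chainsEndingAt (idealCov color γ) s → n ≤ (FreeSet chain color γ s).ncard := by
      intro n
      induction n with
      | zero => intro s _; omega
      | succ n ih =>
        intro s hn
        obtain ⟨s', hedge, hn'⟩ := end_pop hn
        obtain ⟨u, hcγ, hus', hs⟩ := hedge
        have hIH := ih s' hn'
        have huF : u ∈ FreeSet chain color γ s := by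
          refine ⟨hs ▸ Set.mem_insert u s'.1, hcγ, fun x hx hux => ?_⟩
          rw [hs] at hx
          rcases hx with rfl | hx
          · exact absurd hux (lt_irrefl x)
          · exact absurd (s'.2 hux.le hx) hus'
        have hsub : FreeSet chain color γ s' ⊆ FreeSet chain color γ s := by
          rintro v ⟨hv, hvc, hvcond⟩
          refine ⟨hs ▸ Set.mem_insert_of_mem u hv, hvc, fun x hx hvx => ?_⟩
          rw [hs] at hx
          rcases hx with rfl | hx
          · -- x = u, v < u
            obtain ⟨z, hvz, hcov⟩ := exists_le_covby hvx
            have hzs : z ∈ s.1 := s.2 hcov.lt.le (hs ▸ Set.mem_insert x s'.1)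
            have hzs' : z ∈ s'.1 := by
              rw [hs] at hzs
              rcases hzs with rfl | hzs
              · exact absurd hcov.lt (lt_irrefl z)
              · exact hzs
            have hcz : chain z = chain v := by
              rcases eq_or_lt_of_le hvz with rfl | hvz'
              · rfl
              · exact hvcond z hzs' hvz'
            have hcolz : color z = γ := by
              rw [hcolor.1 z v hcz]; exact hvc
            rcases hgrid.2.2.2 z x hcov with h | h
            · omega
            · exact absurd (hcolor.2 z x (Relation.ReflTransGen.single (Or.inl hcov)) h)
                (by rw [hcolz, hcγ]; simp)
          · exact hvcond x hx hvx
        have husF : u ∉ FreeSet chain color γ s' := fun hc => hus' hc.1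
        have h1 : (insert u (FreeSet chain color γ s')).ncard
            = (FreeSet chain color γ s').ncard + 1 :=
          Set.ncard_insert_of_notMem husF (Set.toFinite _)
        have h2 : (insert u (FreeSet chain color γ s')).ncard
            ≤ (FreeSet chain color γ s).ncard :=
          Set.ncard_le_ncard (Set.insert_subset huF hsub) (Set.toFinite _)
        omega
    exact csSup_le ⟨0, zero_mem_end s⟩ (fun n hn => key n s hn)
  · -- ncard FreeSet ≤ rho
    have key : ∀ n : ℕ, ∀ s : OrderIdeal V, s.1.ncard = n →
        (FreeSet chain color γ s).ncard ≤ rhoOf (idealCov color γ) s := by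
      intro n
      induction n using Nat.strong_induction_on with
      | _ n ih =>
        intro s hsn
        rcases Set.eq_empty_or_nonempty (FreeSet chain color γ s) with hF | ⟨u, huF⟩
        · simp [hF]
        · obtain ⟨x, hxA, hxmax⟩ := wellFounded_gt.has_min
            {x | x ∈ s.1 ∧ u ≤ x} ⟨u, huF.1, le_refl u⟩
          have hcx : chain x = chain u := by
            rcases eq_or_lt_of_le hxA.2 with rfl | h
            · rfl
            · exact huF.2.2 x hxA.1 h
          have hcolx : color x = γ := by rw [hcolor.1 x u hcx]; exact huF.2.1
          have hxmaxs : ∀ y ∈ s.1, ¬ x < y := by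
            intro y hy hxy
            have hyA : y ∈ {x | x ∈ s.1 ∧ u ≤ x} := ⟨hy, hxA.2.trans hxy.le⟩
            exact hxmax y hyA hxy
          have hlow : IsLowerSet (s.1 \ {x}) := by
            intro a b hba ha
            refine ⟨s.2 hba ha.1, fun hbx => ?_⟩
            simp only [Set.mem_singleton_iff] at hbx
            subst hbx
            rcases eq_or_lt_of_le hba with rfl | h
            · exact ha.2 rfl
            · exact hxmaxs a ha.1 h
          set s' : OrderIdeal V := ⟨s.1 \ {x}, hlow⟩ with hs'def
          have hedge : idealCov color γ s' s := by
            refine ⟨x, hcolx, by simp [hs'def], ?_⟩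
            simp only [hs'def]
            rw [Set.insert_diff_singleton, Set.insert_eq_self.2 hxA.1]
          have hcard : s'.1.ncard < n := by
            have : s'.1 ⊂ s.1 := idealCov_ssubset hedge
            have := Set.ncard_lt_ncard this (Set.toFinite _)
            omega
          have hIH := ih s'.1.ncard hcard s' rfl
          have hxF : x ∈ FreeSet chain color γ s :=
            ⟨hxA.1, hcolx, fun y hy hxy => absurd hxy (hxmaxs y hy)⟩
          have hsub : FreeSet chain color γ s \ {x} ⊆ FreeSet chain color γ s' := by
            rintro v ⟨⟨hv, hvc, hvcond⟩, hvx⟩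
            simp only [Set.mem_singleton_iff] at hvx
            refine ⟨⟨hv, hvx⟩, hvc, fun y hy hvy => hvcond y hy.1 hvy⟩
          have h1 : (FreeSet chain color γ s \ {x}).ncard + 1
              = (FreeSet chain color γ s).ncard :=
            Set.ncard_diff_singleton_add_one hxF (Set.toFinite _)
          have h2 : (FreeSet chain color γ s \ {x}).ncard
              ≤ (FreeSet chain color γ s').ncard :=
            Set.ncard_le_ncard hsub (Set.toFinite _)
          have h3 := rho_ge_succ hedge
          omega
    exact key s.1.ncard s rfl

theorem delta_eq_cofree (s : OrderIdeal V) :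
    deltaOf (idealCov color γ) s = (CoFreeSet chain color γ s).ncard := by
  apply le_antisymm
  · have key : ∀ n : ℕ, ∀ s : OrderIdeal V,
        n ∈ chainsStartingAt (idealCov color γ) s → n ≤ (CoFreeSet chain color γ s).ncard := by
      intro n
      induction n with
      | zero => intro s _; omega
      | succ n ih =>
        intro s hn
        obtain ⟨t, hedge, hn'⟩ := start_pop hn
        obtain ⟨u, hcγ, hus, ht⟩ := hedge
        have hIH := ih t hn'
        have hsubt : s.1 ⊆ t.1 := ht ▸ Set.subset_insert u s.1
        have huF : u ∈ CoFreeSet chain color γ s := by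
          refine ⟨hus, hcγ, fun x hx hxu => ?_⟩
          have hxt : x ∈ t.1 := t.2 hxu.le (ht ▸ Set.mem_insert u s.1)
          rw [ht] at hxt
          rcases hxt with rfl | hxt
          · exact absurd hxu (lt_irrefl x)
          · exact absurd hxt hx
        have hsub : CoFreeSet chain color γ t ⊆ CoFreeSet chain color γ s := by
          rintro v ⟨hv, hvc, hvcond⟩
          refine ⟨fun hc => hv (hsubt hc), hvc, fun x hx hxv => ?_⟩
          by_cases hxt : x ∈ t.1
          · rw [ht] at hxt
            rcases hxt with rfl | hxt
            · -- x = u, u < v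
              obtain ⟨z, hcov, hzv⟩ := exists_covby_le hxv
              have hzt : z ∉ t.1 := by
                intro hzt
                rw [ht] at hzt
                rcases hzt with rfl | hzt
                · exact absurd hcov.lt (lt_irrefl z)
                · exact hus (s.2 hcov.lt.le hzt)
              have hcz : chain z = chain v := by
                rcases eq_or_lt_of_le hzv with rfl | hzv'
                · rfl
                · exact hvcond z hzt hzv'
              have hcolz : color z = γ := by
                rw [hcolor.1 z v hcz]; exact hvc
              rcases hgrid.2.2.2 x z hcov with h | h
              · omega
              · exact absurd (hcolor.2 x z (Relation.ReflTransGen.single (Or.inl hcov)) h)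
                  (by rw [hcolz, hcγ]; simp)
            · exact absurd hxt hx
          · exact hvcond x hxt hxv
        have husF : u ∉ CoFreeSet chain color γ t :=
          fun hc => hc.1 (ht ▸ Set.mem_insert u s.1)
        have h1 : (insert u (CoFreeSet chain color γ t)).ncard
            = (CoFreeSet chain color γ t).ncard + 1 :=
          Set.ncard_insert_of_notMem husF (Set.toFinite _)
        have h2 : (insert u (CoFreeSet chain color γ t)).ncard
            ≤ (CoFreeSet chain color γ s).ncard :=
          Set.ncard_le_ncard (Set.insert_subset huF hsub) (Set.toFinite _)
        omega
    exact csSup_le ⟨0, zero_mem_start s⟩ (fun n hn => key n s hn)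
  · have key : ∀ n : ℕ, ∀ s : OrderIdeal V, (s.1ᶜ).ncard = n →
        (CoFreeSet chain color γ s).ncard ≤ deltaOf (idealCov color γ) s := by
      intro n
      induction n using Nat.strong_induction_on with
      | _ n ih =>
        intro s hsn
        rcases Set.eq_empty_or_nonempty (CoFreeSet chain color γ s) with hF | ⟨u, huF⟩
        · simp [hF]
        · obtain ⟨x, hxA, hxmin⟩ := wellFounded_lt.has_min
            {x | x ∉ s.1 ∧ x ≤ u} ⟨u, huF.1, le_refl u⟩
          have hcx : chain x = chain u := by
            rcases eq_or_lt_of_le hxA.2 with rfl | h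
            · rfl
            · exact huF.2.2 x hxA.1 h
          have hcolx : color x = γ := by rw [hcolor.1 x u hcx]; exact huF.2.1
          have hxmins : ∀ y, y ∉ s.1 → ¬ y < x := by
            intro y hy hyx
            exact hxmin y ⟨hy, hyx.le.trans hxA.2⟩ hyx
          have hlow : IsLowerSet (insert x s.1) := by
            intro a b hba ha
            rcases ha with heq | ha
            · subst heq
              rcases eq_or_lt_of_le hba with heq2 | h
              · rw [heq2]; exact Set.mem_insert _ _
              · by_cases hbs : b ∈ s.1
                · exact Set.mem_insert_of_mem _ hbs
                · exact absurd h (hxmins b hbs)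
            · exact Set.mem_insert_of_mem _ (s.2 hba ha)
          set t : OrderIdeal V := ⟨insert x s.1, hlow⟩ with htdef
          have hedge : idealCov color γ s t := ⟨x, hcolx, hxA.1, rfl⟩
          have hcompl : t.1ᶜ = s.1ᶜ \ {x} := by
            have ht1 : t.1 = insert x s.1 := rfl
            rw [ht1]
            ext y
            by_cases hy : y = x <;> simp [hy, hxA.1]
          have hcard : (t.1ᶜ).ncard < n := by
            have hx1 : x ∈ s.1ᶜ := hxA.1
            have := Set.ncard_diff_singleton_add_one hx1 (Set.toFinite _)
            rw [hcompl]
            omega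
          have hIH := ih (t.1ᶜ).ncard hcard t rfl
          have hxF : x ∈ CoFreeSet chain color γ s :=
            ⟨hxA.1, hcolx, fun y hy hyx => absurd hyx (hxmins y hy)⟩
          have hsub : CoFreeSet chain color γ s \ {x} ⊆ CoFreeSet chain color γ t := by
            rintro v ⟨⟨hv, hvc, hvcond⟩, hvx⟩
            simp only [Set.mem_singleton_iff] at hvx
            refine ⟨?_, hvc, fun y hy hyv => ?_⟩
            · intro hvt
              rcases hvt with rfl | hvt
              · exact hvx rfl
              · exact hv hvt
            · refine hvcond y (fun hys => hy ?_) hyv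
              exact Set.mem_insert_of_mem x hys
          have h1 : (CoFreeSet chain color γ s \ {x}).ncard + 1
              = (CoFreeSet chain color γ s).ncard :=
            Set.ncard_diff_singleton_add_one hxF (Set.toFinite _)
          have h2 : (CoFreeSet chain color γ s \ {x}).ncard
              ≤ (CoFreeSet chain color γ t).ncard :=
            Set.ncard_le_ncard hsub (Set.toFinite _)
          have h3 := delta_ge_succ hedge
          omega
    exact key (s.1ᶜ).ncard s rfl

end Formula

/-! ### Part 4: pull-back lemmas from the decomposition conditions -/

section Decomp
variable {V : Type*} [PartialOrder V] [Fintype V] {m k : ℕ} {chain : V → ℕ}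
  {idx : V → Fin k} (hgrid : IsGridPoset m chain) (hdec : IsDecomposition chain idx)

include hgrid hdec

lemma lemmaP {u y : V} (huy : u < y) (hidx : idx u < idx y) :
    ∃ a, idx a = idx u ∧ u ≤ a ∧ a < y ∧ chain a = chain y := by
  obtain ⟨v, -, hyv, hvmax, -⟩ := climbMax hgrid Set.univ
    (fun a b c _ _ _ _ => Set.mem_univ b) y (Set.mem_univ y)
  obtain ⟨astar, hastar, huastar, hamax, hIVT⟩ := climbMax hgrid {w | idx w = idx u}
    (fun a b c ha hc hab hbc => by
      have h1 := hdec.1 a b hab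
      have h2 := hdec.1 b c hbc
      rw [ha] at h1
      rw [hc] at h2
      exact le_antisymm h2 h1) u rfl
  have hvy : chain v ≤ chain y := chain_anti hgrid hyv
  have hyu : chain y ≤ chain u := chain_anti hgrid huy.le
  have hiv : idx u < idx v := lt_of_lt_of_le hidx (hdec.1 y v hyv)
  have hay : chain astar ≤ chain v := hdec.2.2.1 (idx u) astar v hastar hiv
    (fun w hw => hamax w hw) (fun w _ => hvmax w (Set.mem_univ w))
  obtain ⟨e, heS, hue, hce⟩ := hIVT (chain y) (le_trans hay hvy) hyu
  rcases fiber_comp hgrid hce with hee | hee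
  · have hne : e ≠ y := by
      intro h
      rw [h] at heS
      exact absurd heS (ne_of_gt hidx)
    exact ⟨e, heS, hue, lt_of_le_of_ne hee hne, hce⟩
  · exfalso
    have h3 := hdec.1 y e hee
    rw [heS] at h3
    exact absurd (lt_of_lt_of_le hidx h3) (lt_irrefl _)

lemma lemmaPdualAux : ∀ D : ℕ, ∀ x u : V, x < u → idx x < idx u →
    (idx u).1 - (idx x).1 ≤ D →
    ∃ b, idx b = idx u ∧ x < b ∧ b ≤ u ∧ chain b = chain x := by
  intro D
  induction D with
  | zero =>
    intro x u _ hidx hD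
    exfalso
    have := Fin.lt_def.1 hidx
    omega
  | succ D ih =>
    intro x u hxu hidx hD
    by_cases hch : chain x = chain u
    · exact ⟨u, rfl, hxu, le_refl u, hch.symm⟩
    · have hcu : chain u ≤ chain x := chain_anti hgrid hxu.le
      obtain ⟨w', hw'S, hw'x, hw'min, -⟩ := climbMin hgrid {w | idx w = idx x}
        (fun a b c ha hc hab hbc => by
          have h1 := hdec.1 a b hab
          have h2 := hdec.1 b c hbc
          rw [ha] at h1
          rw [hc] at h2
          exact le_antisymm h2 h1) x rfl
      obtain ⟨c, hcS, hcu2, hcmin, hIVT⟩ := climbMin hgrid {w | idx x < idx w}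
        (fun a b c ha _ hab _ => lt_of_lt_of_le ha (hdec.1 a b hab)) u hidx
      have h1 : chain w' ≤ chain c := hdec.2.2.2 (idx x) w' c hw'S hcS
        (fun w hw => hw'min w hw) (fun w hw => hcmin w hw)
      have h2 : chain x ≤ chain w' := chain_anti hgrid hw'x
      obtain ⟨e, heS, heu, hce⟩ := hIVT (chain x) hcu (h2.trans h1)
      rcases fiber_comp hgrid hce with hee | hee
      · exfalso
        have h3 := hdec.1 e x hee
        exact absurd (lt_of_le_of_lt h3 heS) (lt_irrefl _)
      · have hxe : x < e := lt_of_le_of_ne hee (by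
          rintro rfl
          exact absurd (show idx x < idx x from heS) (lt_irrefl _))
        rcases eq_or_lt_of_le (hdec.1 e u heu) with hieq | hilt
        · exact ⟨e, hieq, hxe, heu, hce⟩
        · have heu' : e < u := lt_of_le_of_ne heu (by
            rintro rfl
            exact hch (hce.symm))
          have hD2 : (idx u).1 - (idx e).1 ≤ D := by
            have ha := Fin.lt_def.1 heS
            have hb := Fin.lt_def.1 hilt
            have hc2 := Fin.lt_def.1 hidx
            omega
          obtain ⟨b, hb1, hb2, hb3, hb4⟩ := ih e u heu' hilt hD2
          exact ⟨b, hb1, lt_trans hxe hb2, hb3, hb4.trans hce⟩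

lemma lemmaPdual {x u : V} (hxu : x < u) (hidx : idx x < idx u) :
    ∃ b, idx b = idx u ∧ x < b ∧ b ≤ u ∧ chain b = chain x :=
  lemmaPdualAux hgrid hdec k x u hxu hidx (by have := (idx u).isLt; omega)

lemma claimG_rho (s : OrderIdeal V) {u : V}
    (H : ∀ x, idx x = idx u → x ∈ s.1 → u < x → chain x = chain u) :
    ∀ x ∈ s.1, u < x → chain x = chain u := by
  intro x hx hux
  rcases eq_or_lt_of_le (chain_anti hgrid hux.le) with h | h
  · exact h
  · exfalso
    rcases eq_or_lt_of_le (hdec.1 u x hux.le) with hi | hi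
    · have := H x hi.symm hx hux
      omega
    · obtain ⟨a, ha1, ha2, ha3, ha4⟩ := lemmaP hgrid hdec hux hi
      have has : a ∈ s.1 := s.2 ha3.le hx
      have hua : u < a := lt_of_le_of_ne ha2 (by rintro rfl; omega)
      have := H a ha1 has hua
      omega

lemma claimG_delta (s : OrderIdeal V) {u : V}
    (H : ∀ x, idx x = idx u → x ∉ s.1 → x < u → chain x = chain u) :
    ∀ x, x ∉ s.1 → x < u → chain x = chain u := by
  intro x hx hxu
  rcases eq_or_lt_of_le (chain_anti hgrid hxu.le) with h | h
  · exact h.symm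
  · exfalso
    rcases eq_or_lt_of_le (hdec.1 x u hxu.le) with hi | hi
    · have := H x hi hx hxu
      omega
    · obtain ⟨b, hb1, hb2, hb3, hb4⟩ := lemmaPdual hgrid hdec hxu hi
      have hbs : b ∉ s.1 := fun hbs => hx (s.2 hb2.le hbs)
      have hbu : b < u := lt_of_le_of_ne hb3 (by rintro rfl; omega)
      have := H b hb1 hbs hbu
      omega

end Decomp

/-! ### Part 5: pieces are two-color grid posets; transfer of the counting sets -/

section Pieces
variable {V : Type*} [PartialOrder V] [Fintype V] {m k : ℕ} {chain : V → ℕ}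
  {color : V → TwoColor} {idx : V → Fin k}

lemma piece_covby (hmono : ∀ u v : V, u ≤ v → idx u ≤ idx v) {i : Fin k}
    {x y : {v : V // idx v = i}} (h : x ⋖ y) : (x : V) ⋖ (y : V) := by
  constructor
  · exact Subtype.coe_lt_coe.2 h.lt
  · intro w hw1 hw2
    have hiw : idx w = i := by
      have h1 := hmono x.1 w hw1.le
      have h2 := hmono w y.1 hw2.le
      rw [x.2] at h1
      rw [y.2] at h2
      exact le_antisymm h2 h1
    exact h.2 (show x < ⟨w, hiw⟩ from Subtype.coe_lt_coe.1 hw1)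
      (show (⟨w, hiw⟩ : {v : V // idx v = i}) < y from Subtype.coe_lt_coe.1 hw2)

lemma piece_grid (hgrid : IsGridPoset m chain)
    (hmono : ∀ u v : V, u ≤ v → idx u ≤ idx v) (i : Fin k) :
    IsGridPoset m (fun x : {v : V // idx v = i} => chain x.1) := by
  refine ⟨hgrid.1, fun v => hgrid.2.1 v.1, ?_, ?_⟩
  · intro n a ha b hb hne
    have hcomp := hgrid.2.2.1 n (show chain (a : V) = n from ha)
      (show chain (b : V) = n from hb) (fun h => hne (Subtype.ext h))
    rcases hcomp with h | h
    · exact Or.inl (Subtype.coe_le_coe.1 h)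
    · exact Or.inr (Subtype.coe_le_coe.1 h)
  · intro a b hab
    exact hgrid.2.2.2 a.1 b.1 (piece_covby hmono hab)

lemma piece_color (hcolor : IsTwoColoring chain color)
    (hmono : ∀ u v : V, u ≤ v → idx u ≤ idx v) (i : Fin k) :
    IsTwoColoring (fun x : {v : V // idx v = i} => chain x.1) (subColor idx color i) := by
  constructor
  · exact fun u v hc => hcolor.1 u.1 v.1 hc
  · intro u v hconn hch
    refine hcolor.2 u.1 v.1 ?_ hch
    exact Relation.ReflTransGen.lift Subtype.val
      (fun a b hab => hab.imp (fun hc => piece_covby hmono hc) (fun hc => piece_covby hmono hc))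
      _ _ hconn

variable (hgrid : IsGridPoset m chain) (hcolor : IsTwoColoring chain color)
  (hdec : IsDecomposition chain idx)

include hgrid hdec

lemma free_transfer (γ : TwoColor) (s : OrderIdeal V) {j : Fin k} {u : V} (hj : idx u = j) :
    u ∈ FreeSet chain color γ s ↔
      (⟨u, hj⟩ : {v : V // idx v = j}) ∈ FreeSet (fun x : {v : V // idx v = j} => chain x.1)
        (subColor idx color j) γ (restrictIdeal idx s j) := by
  constructor
  · rintro ⟨hu, hc, hcond⟩
    exact ⟨hu, hc, fun y hy hlt => hcond y.1 hy (Subtype.coe_lt_coe.2 hlt)⟩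
  · rintro ⟨hu, hc, hcond⟩
    refine ⟨hu, hc, ?_⟩
    refine claimG_rho hgrid hdec s (u := u) ?_
    intro x hx hxs hux
    exact hcond ⟨x, by rw [hx, hj]⟩ hxs (Subtype.mk_lt_mk.2 hux)

lemma cofree_transfer (γ : TwoColor) (s : OrderIdeal V) {j : Fin k} {u : V} (hj : idx u = j) :
    u ∈ CoFreeSet chain color γ s ↔
      (⟨u, hj⟩ : {v : V // idx v = j}) ∈ CoFreeSet (fun x : {v : V // idx v = j} => chain x.1)
        (subColor idx color j) γ (restrictIdeal idx s j) := by
  constructor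
  · rintro ⟨hu, hc, hcond⟩
    exact ⟨hu, hc, fun y hy hlt => hcond y.1 hy (Subtype.coe_lt_coe.2 hlt)⟩
  · rintro ⟨hu, hc, hcond⟩
    refine ⟨hu, hc, ?_⟩
    refine claimG_delta hgrid hdec s (u := u) ?_
    intro x hx hxs hxu
    exact hcond ⟨x, by rw [hx, hj]⟩ hxs (Subtype.mk_lt_mk.2 hxu)

lemma free_ncard (γ : TwoColor) (s : OrderIdeal V) (j : Fin k) :
    (FreeSet (fun x : {v : V // idx v = j} => chain x.1) (subColor idx color j) γ
      (restrictIdeal idx s j)).ncard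
    = (FreeSet chain color γ s ∩ {w | idx w = j}).ncard := by
  rw [← Set.ncard_image_of_injective _ (Subtype.val_injective
    (p := fun v => idx v = j))]
  congr 1
  ext w
  constructor
  · rintro ⟨x, hx, rfl⟩
    exact ⟨(free_transfer hgrid hdec γ s x.2).2 hx, x.2⟩
  · rintro ⟨hw, hwj⟩
    exact ⟨⟨w, hwj⟩, (free_transfer hgrid hdec γ s hwj).1 hw, rfl⟩

lemma cofree_ncard (γ : TwoColor) (s : OrderIdeal V) (j : Fin k) :
    (CoFreeSet (fun x : {v : V // idx v = j} => chain x.1) (subColor idx color j) γ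
      (restrictIdeal idx s j)).ncard
    = (CoFreeSet chain color γ s ∩ {w | idx w = j}).ncard := by
  rw [← Set.ncard_image_of_injective _ (Subtype.val_injective
    (p := fun v => idx v = j))]
  congr 1
  ext w
  constructor
  · rintro ⟨x, hx, rfl⟩
    exact ⟨(cofree_transfer hgrid hdec γ s x.2).2 hx, x.2⟩
  · rintro ⟨hw, hwj⟩
    exact ⟨⟨w, hwj⟩, (cofree_transfer hgrid hdec γ s hwj).1 hw, rfl⟩

end Pieces

/-- Lemma 3.1(2): if the two-color grid poset `P` decomposes as
`P = P₁ ◁ P₂ ◁ ⋯ ◁ P_k` and each edge-colored lattice `L_i = J_color(P_i)` satisfies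
the structure condition for a `2 × 2` integer matrix `M` (with rows `M_α`, `M_β`),
then `L = J_color(P)` satisfies the structure condition for `M` as well. -/
theorem grid_decomposition_structure_condition {V : Type*} [PartialOrder V] [Fintype V]
    {m k : ℕ} (chain : V → ℕ) (color : V → TwoColor) (idx : V → Fin k)
    (hgrid : IsGridPoset m chain) (hcolor : IsTwoColoring chain color)
    (hdec : IsDecomposition chain idx) (M : TwoColor → ℤ × ℤ)
    (h : ∀ i : Fin k, StructureCondition (idealCov (subColor idx color i)) M) :
    StructureCondition (idealCov color) M := by
  intro γ s t hedge
  obtain ⟨u0, hcol, hnot, ht⟩ := hedge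
  have hmono := hdec.1
  set i := idx u0 with hidef
  have hedge_i : idealCov (subColor idx color i) γ
      (restrictIdeal idx s i) (restrictIdeal idx t i) := by
    refine ⟨⟨u0, rfl⟩, hcol, hnot, ?_⟩
    ext x
    simp only [restrictIdeal, Set.mem_setOf_eq, ht, Set.mem_insert_iff]
    constructor
    · rintro (hc | hc)
      · exact Or.inl (Subtype.ext hc)
      · exact Or.inr hc
    · rintro (hc | hc)
      · exact Or.inl (congrArg Subtype.val hc)
      · exact Or.inr hc
  have hrestrict_eq : ∀ j : Fin k, j ≠ i → restrictIdeal idx t j = restrictIdeal idx s j := by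
    intro j hj
    apply Subtype.ext
    ext x
    simp only [restrictIdeal, Set.mem_setOf_eq, ht, Set.mem_insert_iff]
    constructor
    · rintro (hc | hc)
      · exfalso
        apply hj
        rw [← x.2, hc]
      · exact hc
    · exact fun hc => Or.inr hc
  have hρ : ∀ γ' : TwoColor,
      rhoOf (idealCov color γ') t
        + rhoOf (idealCov (subColor idx color i) γ') (restrictIdeal idx s i)
      = rhoOf (idealCov color γ') s
        + rhoOf (idealCov (subColor idx color i) γ') (restrictIdeal idx t i) := by
    intro γ'
    rw [rho_eq_free hgrid hcolor γ' t, rho_eq_free hgrid hcolor γ' s,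
      rho_eq_free (piece_grid hgrid hmono i) (piece_color hcolor hmono i) γ'
        (restrictIdeal idx s i),
      rho_eq_free (piece_grid hgrid hmono i) (piece_color hcolor hmono i) γ'
        (restrictIdeal idx t i),
      free_ncard hgrid hdec γ' s i, free_ncard hgrid hdec γ' t i]
    have h1 := Set.ncard_inter_add_ncard_diff_eq_ncard (FreeSet chain color γ' t)
      {w | idx w = i} (Set.toFinite _)
    have h2 := Set.ncard_inter_add_ncard_diff_eq_ncard (FreeSet chain color γ' s)
      {w | idx w = i} (Set.toFinite _)
    have h3 : FreeSet chain color γ' t \ {w | idx w = i}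
        = FreeSet chain color γ' s \ {w | idx w = i} := by
      ext w
      constructor
      · rintro ⟨hw, hwj⟩
        have hne : idx w ≠ i := hwj
        refine ⟨?_, hwj⟩
        have hm := (free_transfer hgrid hdec γ' t (j := idx w) rfl).1 hw
        rw [hrestrict_eq (idx w) hne] at hm
        exact (free_transfer hgrid hdec γ' s (j := idx w) rfl).2 hm
      · rintro ⟨hw, hwj⟩
        have hne : idx w ≠ i := hwj
        refine ⟨?_, hwj⟩
        have hm := (free_transfer hgrid hdec γ' s (j := idx w) rfl).1 hw
        rw [← hrestrict_eq (idx w) hne] at hm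
        exact (free_transfer hgrid hdec γ' t (j := idx w) rfl).2 hm
    rw [h3] at h1
    omega
  have hδ : ∀ γ' : TwoColor,
      deltaOf (idealCov color γ') t
        + deltaOf (idealCov (subColor idx color i) γ') (restrictIdeal idx s i)
      = deltaOf (idealCov color γ') s
        + deltaOf (idealCov (subColor idx color i) γ') (restrictIdeal idx t i) := by
    intro γ'
    rw [delta_eq_cofree hgrid hcolor γ' t, delta_eq_cofree hgrid hcolor γ' s,
      delta_eq_cofree (piece_grid hgrid hmono i) (piece_color hcolor hmono i) γ'
        (restrictIdeal idx s i),
      delta_eq_cofree (piece_grid hgrid hmono i) (piece_color hcolor hmono i) γ'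
        (restrictIdeal idx t i),
      cofree_ncard hgrid hdec γ' s i, cofree_ncard hgrid hdec γ' t i]
    have h1 := Set.ncard_inter_add_ncard_diff_eq_ncard (CoFreeSet chain color γ' t)
      {w | idx w = i} (Set.toFinite _)
    have h2 := Set.ncard_inter_add_ncard_diff_eq_ncard (CoFreeSet chain color γ' s)
      {w | idx w = i} (Set.toFinite _)
    have h3 : CoFreeSet chain color γ' t \ {w | idx w = i}
        = CoFreeSet chain color γ' s \ {w | idx w = i} := by
      ext w
      constructor
      · rintro ⟨hw, hwj⟩
        have hne : idx w ≠ i := hwj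
        refine ⟨?_, hwj⟩
        have hm := (cofree_transfer hgrid hdec γ' t (j := idx w) rfl).1 hw
        rw [hrestrict_eq (idx w) hne] at hm
        exact (cofree_transfer hgrid hdec γ' s (j := idx w) rfl).2 hm
      · rintro ⟨hw, hwj⟩
        have hne : idx w ≠ i := hwj
        refine ⟨?_, hwj⟩
        have hm := (cofree_transfer hgrid hdec γ' s (j := idx w) rfl).1 hw
        rw [← hrestrict_eq (idx w) hne] at hm
        exact (cofree_transfer hgrid hdec γ' t (j := idx w) rfl).2 hm
    rw [h3] at h1
    omega
  have hMi := h i γ _ _ hedge_i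
  have hfst := congrArg Prod.fst hMi
  have hsnd := congrArg Prod.snd hMi
  simp only [wtOf, Prod.fst_add, Prod.snd_add] at hfst hsnd
  have hρa := hρ TwoColor.alpha
  have hρb := hρ TwoColor.beta
  have hδa := hδ TwoColor.alpha
  have hδb := hδ TwoColor.beta
  zify at hρa hρb hδa hδb
  have goal1 : (wtOf (idealCov color) t).1 = (wtOf (idealCov color) s + M γ).1 := by
    simp only [wtOf, Prod.fst_add]
    linarith [hfst, hρa, hδa]
  have goal2 : (wtOf (idealCov color) t).2 = (wtOf (idealCov color) s + M γ).2 := by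
    simp only [wtOf, Prod.snd_add]
    linarith [hsnd, hρb, hδb]
  exact Prod.ext goal1 goal2
end

section
/- For all integers a, b ≥ 0, the edge-colored distributive lattice L_C2(a,b) of C2-semistandard tableaux of shape (a,b) satisfies the structure condition for the C2 Cartan matrix with rows M_α = (2,−1), M_β = (−2,2): for every covering edge S ⋖ T of color γ, wt(T) = wt(S) + M_γ. -/
/-- A filling of the shape with `b` columns of length two (each recorded as
(top entry, bottom entry)) followed by `a` columns of length one. -/
abbrev TabT (a b : ℕ) : Type := (Fin b → ℕ × ℕ) × (Fin a → ℕ)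

/-- `n_k(T)`: the number of entries of the tableau `T` equal to `k`. -/
def nkOf {m n : ℕ} (T : (Fin m → ℕ × ℕ) × (Fin n → ℕ)) (k : ℕ) : ℕ :=
  (Finset.univ.filter fun j : Fin m => (T.1 j).1 = k).card +
    (Finset.univ.filter fun j : Fin m => (T.1 j).2 = k).card +
    (Finset.univ.filter fun i : Fin n => T.2 i = k).card

/-- The set of `A2`-semistandard tableaux of shape `(a,b)`: entries from `{1,2,3}`,
rows weakly increasing, columns strictly increasing. -/
def SA2 (a b : ℕ) : Set (TabT a b) :=
  {T | (∀ j : Fin b, 1 ≤ (T.1 j).1 ∧ (T.1 j).1 ≤ 3 ∧ 1 ≤ (T.1 j).2 ∧ (T.1 j).2 ≤ 3 ∧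
          (T.1 j).1 < (T.1 j).2) ∧
       (∀ i : Fin a, 1 ≤ T.2 i ∧ T.2 i ≤ 3) ∧
       (∀ j j' : Fin b, j ≤ j' → (T.1 j).1 ≤ (T.1 j').1 ∧ (T.1 j).2 ≤ (T.1 j').2) ∧
       (∀ i i' : Fin a, i ≤ i' → T.2 i ≤ T.2 i') ∧
       (∀ (j : Fin b) (i : Fin a), (T.1 j).1 ≤ T.2 i)}

/-- The set of `C2`-semistandard tableaux of shape `(a,b)`: entries from `{1,2,3,4}`,
rows weakly increasing, columns strictly increasing, no column equal to `(1,4)`,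
and at most one column equal to `(2,3)`. -/
def SC2 (a b : ℕ) : Set (TabT a b) :=
  {T | (∀ j : Fin b, 1 ≤ (T.1 j).1 ∧ (T.1 j).1 ≤ 4 ∧ 1 ≤ (T.1 j).2 ∧ (T.1 j).2 ≤ 4 ∧
          (T.1 j).1 < (T.1 j).2) ∧
       (∀ i : Fin a, 1 ≤ T.2 i ∧ T.2 i ≤ 4) ∧
       (∀ j j' : Fin b, j ≤ j' → (T.1 j).1 ≤ (T.1 j').1 ∧ (T.1 j).2 ≤ (T.1 j').2) ∧
       (∀ i i' : Fin a, i ≤ i' → T.2 i ≤ T.2 i') ∧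
       (∀ (j : Fin b) (i : Fin a), (T.1 j).1 ≤ T.2 i) ∧
       (∀ j : Fin b, T.1 j ≠ (1, 4)) ∧
       (∀ j j' : Fin b, T.1 j = (2, 3) → T.1 j' = (2, 3) → j = j')}

/-- The restrictions of Figure 4.5 on a pair of adjacent length-two columns of a
`G2`-semistandard tableau. -/
def g2pair2 (c c' : ℕ × ℕ) : Prop :=
  (c = (1, 4) → c' ≠ (1, 4) ∧ c' ≠ (1, 5) ∧ c' ≠ (1, 6) ∧ c' ≠ (1, 7)) ∧
  (c = (1, 5) → c' ≠ (1, 5) ∧ c' ≠ (1, 6) ∧ c' ≠ (1, 7)) ∧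
  (c = (1, 6) → c' ≠ (1, 6) ∧ c' ≠ (1, 7) ∧ c' ≠ (2, 6) ∧ c' ≠ (2, 7)) ∧
  (c = (2, 6) → c' ≠ (2, 6) ∧ c' ≠ (2, 7)) ∧
  (c = (1, 7) → c' ≠ (1, 7) ∧ c' ≠ (2, 7) ∧ c' ≠ (3, 7) ∧ c' ≠ (4, 7)) ∧
  (c = (2, 7) → c' ≠ (2, 7) ∧ c' ≠ (3, 7) ∧ c' ≠ (4, 7)) ∧
  (c = (3, 7) → c' ≠ (3, 7) ∧ c' ≠ (4, 7)) ∧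
  (c = (4, 7) → c' ≠ (4, 7))

/-- The restrictions of Figure 4.5 on a length-two column followed by a
length-one column in a `G2`-semistandard tableau. -/
def g2pair1 (c : ℕ × ℕ) (e : ℕ) : Prop :=
  (c = (1, 4) → e ≠ 1) ∧
  (c = (1, 5) → e ≠ 1) ∧
  (c = (1, 6) → e ≠ 1 ∧ e ≠ 2) ∧
  (c = (2, 6) → e ≠ 2) ∧
  (c = (1, 7) → e ≠ 1 ∧ e ≠ 2 ∧ e ≠ 3 ∧ e ≠ 4) ∧
  (c = (2, 7) → e ≠ 2 ∧ e ≠ 3 ∧ e ≠ 4) ∧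
  (c = (3, 7) → e ≠ 3 ∧ e ≠ 4) ∧
  (c = (4, 7) → e ≠ 4)

/-- The set of `G2`-semistandard tableaux of shape `(a,b)`. -/
def SG2 (a b : ℕ) : Set (TabT a b) :=
  {T | (∀ j : Fin b, 1 ≤ (T.1 j).1 ∧ (T.1 j).1 ≤ 7 ∧ 1 ≤ (T.1 j).2 ∧ (T.1 j).2 ≤ 7 ∧
          (T.1 j).1 < (T.1 j).2) ∧
       (∀ i : Fin a, 1 ≤ T.2 i ∧ T.2 i ≤ 7) ∧
       (∀ j j' : Fin b, j ≤ j' → (T.1 j).1 ≤ (T.1 j').1 ∧ (T.1 j).2 ≤ (T.1 j').2) ∧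
       (∀ i i' : Fin a, i ≤ i' → T.2 i ≤ T.2 i') ∧
       (∀ (j : Fin b) (i : Fin a), (T.1 j).1 ≤ T.2 i) ∧
       (∀ i i' : Fin a, T.2 i = 4 → T.2 i' = 4 → i = i') ∧
       (∀ j : Fin b, T.1 j ≠ (2, 3) ∧ T.1 j ≠ (2, 4) ∧ T.1 j ≠ (3, 4) ∧ T.1 j ≠ (3, 5) ∧
          T.1 j ≠ (4, 5) ∧ T.1 j ≠ (4, 6) ∧ T.1 j ≠ (5, 6)) ∧
       (∀ j j' : Fin b, (j' : ℕ) = (j : ℕ) + 1 → g2pair2 (T.1 j) (T.1 j')) ∧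
       (∀ (j : Fin b) (i : Fin a), (j : ℕ) + 1 = b → (i : ℕ) = 0 → g2pair1 (T.1 j) (T.2 i))}
/-- The edge colors determined by tableau entries: for `A2`, the entry `1` gives
color `α` and the entry `2` gives color `β`. -/
def colEntA2 : ℕ → TwoColor := fun n => if n = 2 then TwoColor.beta else TwoColor.alpha

/-- For `C2`, entries `1` and `3` give color `α` and entry `2` gives color `β`. -/
def colEntC2 : ℕ → TwoColor := fun n => if n = 2 then TwoColor.beta else TwoColor.alpha

/-- For `G2`, entries `1, 3, 4, 6` give color `α` and entries `2, 5` give color `β`. -/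
def colEntG2 : ℕ → TwoColor :=
  fun n => if n = 2 ∨ n = 5 then TwoColor.beta else TwoColor.alpha

/-- The colored covering relation of a lattice of semistandard tableaux:
`T` covers `S` exactly when `S` is obtained from `T` by increasing a single
entry by `1`, and the edge is colored according to the entry of `T`
at the changed position (via `colEnt`). -/
def tabCov {a b : ℕ} (colEnt : ℕ → TwoColor) (SSet : Set (TabT a b)) (γ : TwoColor)
    (S T : {T : TabT a b // T ∈ SSet}) : Prop :=
  (∃ j : Fin b, colEnt ((T.1.1 j).1) = γ ∧
      S.1.1 j = ((T.1.1 j).1 + 1, (T.1.1 j).2) ∧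
      (∀ j' : Fin b, j' ≠ j → S.1.1 j' = T.1.1 j') ∧ S.1.2 = T.1.2) ∨
  (∃ j : Fin b, colEnt ((T.1.1 j).2) = γ ∧
      S.1.1 j = ((T.1.1 j).1, (T.1.1 j).2 + 1) ∧
      (∀ j' : Fin b, j' ≠ j → S.1.1 j' = T.1.1 j') ∧ S.1.2 = T.1.2) ∨
  (∃ i : Fin a, colEnt (T.1.2 i) = γ ∧
      S.1.2 i = T.1.2 i + 1 ∧
      (∀ i' : Fin a, i' ≠ i → S.1.2 i' = T.1.2 i') ∧ S.1.1 = T.1.1)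

/-- The colored covering relation of the lattice `L_A2(a,b)`. -/
def covA2 (a b : ℕ) (γ : TwoColor) (S T : {T : TabT a b // T ∈ SA2 a b}) : Prop :=
  tabCov colEntA2 (SA2 a b) γ S T

/-- The colored covering relation of the lattice `L_C2(a,b)`. -/
def covC2 (a b : ℕ) (γ : TwoColor) (S T : {T : TabT a b // T ∈ SC2 a b}) : Prop :=
  tabCov colEntC2 (SC2 a b) γ S T

/-- The colored covering relation of the lattice `L_G2(a,b)`. -/
def covG2 (a b : ℕ) (γ : TwoColor) (S T : {T : TabT a b // T ∈ SG2 a b}) : Prop :=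
  tabCov colEntG2 (SG2 a b) γ S T

/-- The `A2` Cartan matrix, given by its rows `M_α = (2,−1)`, `M_β = (−1,2)`. -/
def MA2 : TwoColor → ℤ × ℤ
  | TwoColor.alpha => (2, -1)
  | TwoColor.beta => (-1, 2)

/-- The `C2` Cartan matrix, given by its rows `M_α = (2,−1)`, `M_β = (−2,2)`. -/
def MC2 : TwoColor → ℤ × ℤ
  | TwoColor.alpha => (2, -1)
  | TwoColor.beta => (-2, 2)

/-- The `G2` Cartan matrix, given by its rows `M_α = (2,−1)`, `M_β = (−3,2)`. -/
def MG2 : TwoColor → ℤ × ℤ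
  | TwoColor.alpha => (2, -1)
  | TwoColor.beta => (-3, 2)

/-! ### Auxiliary machinery -/

section Generic

variable {V : Type*}

lemma zero_mem_chainsEndingAt (r : V → V → Prop) (t : V) :
    0 ∈ chainsEndingAt r t :=
  ⟨fun _ => t, rfl, fun i hi => absurd hi (Nat.not_lt_zero i)⟩

lemma chainsStartingAt_eq_flip (r : V → V → Prop) (t : V) :
    chainsStartingAt r t = chainsEndingAt (fun x y => r y x) t := by
  ext n
  constructor
  · rintro ⟨c, hc0, hstep⟩
    refine ⟨fun i => c (n - i), by simp [hc0], fun i hi => ?_⟩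
    have h1 : n - (i + 1) + 1 = n - i := by omega
    have := hstep (n - (i + 1)) (by omega)
    rwa [h1] at this
  · rintro ⟨c, hcn, hstep⟩
    refine ⟨fun i => c (n - i), by simp [hcn], fun i hi => ?_⟩
    have h1 : n - (i + 1) + 1 = n - i := by omega
    have := hstep (n - (i + 1)) (by omega)
    rwa [h1] at this

lemma rho_eq (r : V → V → Prop) (W : V → ℕ)
    (hstep : ∀ s u, r s u → W s + 1 = W u)
    (hex : ∀ u, 0 < W u → ∃ s, r s u) (t : V) :
    rhoOf r t = W t := by
  have hub : ∀ t, ∀ n ∈ chainsEndingAt r t, n ≤ W t := by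
    rintro t n ⟨c, hcn, hstepc⟩
    have key : ∀ i, i ≤ n → i ≤ W (c i) := by
      intro i
      induction i with
      | zero => intro _; exact Nat.zero_le _
      | succ k ih =>
        intro hk
        have h1 := hstep _ _ (hstepc k (by omega))
        have := ih (by omega)
        omega
    have := key n le_rfl
    rwa [hcn] at this
  have hmem : ∀ n t, W t = n → n ∈ chainsEndingAt r t := by
    intro n
    induction n with
    | zero => intro t _; exact zero_mem_chainsEndingAt r t
    | succ k ih =>
      intro t hW
      obtain ⟨s, hs⟩ := hex t (by omega)
      have hWs : W s = k := by have := hstep s t hs; omega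
      obtain ⟨c, hck, hstepc⟩ := ih s hWs
      refine ⟨fun i => if i = k + 1 then t else c i, by simp, fun i hi => ?_⟩
      by_cases h : i + 1 = k + 1
      · have hik : i = k := by omega
        simpa [hik, h] using (hck ▸ hs : r (c k) t)
      · have : i ≠ k + 1 := by omega
        simpa [h, this, show i ≠ k by omega] using hstepc i (by omega)
  apply le_antisymm
  · exact csSup_le ⟨0, zero_mem_chainsEndingAt r t⟩ (hub t)
  · exact le_csSup ⟨W t, hub t⟩ (hmem (W t) t rfl)

lemma delta_eq (r : V → V → Prop) (W : V → ℕ)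
    (hstep : ∀ s u, r s u → W u + 1 = W s)
    (hex : ∀ s, 0 < W s → ∃ u, r s u) (t : V) :
    deltaOf r t = W t := by
  unfold deltaOf
  rw [chainsStartingAt_eq_flip]
  exact rho_eq (fun x y => r y x) W (fun s u h => hstep u s h) (fun u h => hex u h) t

end Generic

/-! ### Potentials for the `C2` lattice -/

def fA : ℕ × ℕ → ℕ := fun c => if c = (1,3) then 2 else if c = (2,3) then 1 else 0
def fB : ℕ × ℕ → ℕ := fun c => if c = (2,4) then 2 else if c = (2,3) then 1 else 0
def fC : ℕ × ℕ → ℕ := fun c => if c = (1,2) ∨ c = (2,4) then 1 else 0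
def fD : ℕ × ℕ → ℕ := fun c => if c = (1,3) ∨ c = (3,4) then 1 else 0
def gA : ℕ → ℕ := fun k => if k = 1 ∨ k = 3 then 1 else 0
def gB : ℕ → ℕ := fun k => if k = 2 ∨ k = 4 then 1 else 0
def gC : ℕ → ℕ := fun k => if k = 2 then 1 else 0
def gD : ℕ → ℕ := fun k => if k = 3 then 1 else 0

def pot {a b : ℕ} (f : ℕ × ℕ → ℕ) (g : ℕ → ℕ) (T : TabT a b) : ℕ :=
  (∑ j, f (T.1 j)) + (∑ i, g (T.2 i))

lemma sum_update_int {m : ℕ} {κ : Type*} (u v : Fin m → κ) (j : Fin m)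
    (h : ∀ j', j' ≠ j → u j' = v j') (f : κ → ℕ) :
    (∑ j', (f (u j') : ℤ)) = (∑ j', (f (v j') : ℤ)) + f (u j) - f (v j) := by
  classical
  have hu := Finset.sum_erase_add Finset.univ (fun j' => (f (u j') : ℤ)) (Finset.mem_univ j)
  have hv := Finset.sum_erase_add Finset.univ (fun j' => (f (v j') : ℤ)) (Finset.mem_univ j)
  have hcong : ∑ j' ∈ Finset.univ.erase j, (f (u j') : ℤ)
      = ∑ j' ∈ Finset.univ.erase j, (f (v j') : ℤ) := by
    apply Finset.sum_congr rfl
    intro x hx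
    rw [h x (Finset.ne_of_mem_erase hx)]
  rw [← hu, ← hv, hcong]
  ring

lemma pot_step_col {a b : ℕ} (f : ℕ × ℕ → ℕ) (g : ℕ → ℕ) (S T : TabT a b) (j : Fin b)
    (hcol : ∀ j', j' ≠ j → S.1 j' = T.1 j') (hrow : S.2 = T.2) :
    (pot f g S : ℤ) = pot f g T + f (S.1 j) - f (T.1 j) := by
  have h1 := sum_update_int S.1 T.1 j hcol f
  unfold pot
  push_cast
  rw [hrow]
  omega

lemma pot_step_row {a b : ℕ} (f : ℕ × ℕ → ℕ) (g : ℕ → ℕ) (S T : TabT a b) (i : Fin a)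
    (hrow : ∀ i', i' ≠ i → S.2 i' = T.2 i') (hcol : S.1 = T.1) :
    (pot f g S : ℤ) = pot f g T + g (S.2 i) - g (T.2 i) := by
  have h1 := sum_update_int S.2 T.2 i hrow g
  unfold pot
  push_cast
  rw [hcol]
  omega


/-! ### Classification and update helpers -/

lemma col_cases {a b : ℕ} {T : TabT a b} (hT : T ∈ SC2 a b) (j : Fin b) :
    T.1 j = (1,2) ∨ T.1 j = (1,3) ∨ T.1 j = (2,3) ∨ T.1 j = (2,4) ∨ T.1 j = (3,4) := by
  obtain ⟨h1, -, -, -, -, h14, -⟩ := hT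
  obtain ⟨hx1, hx4, hy1, hy4, hxy⟩ := h1 j
  have h14' := h14 j
  have hmk : T.1 j = ((T.1 j).1, (T.1 j).2) := rfl
  have h14'' : ¬((T.1 j).1 = 1 ∧ (T.1 j).2 = 4) := by
    rintro ⟨e1, e2⟩
    exact h14' (by rw [hmk, e1, e2])
  rw [hmk]
  simp only [Prod.mk.injEq]
  omega

lemma row_cases {a b : ℕ} {T : TabT a b} (hT : T ∈ SC2 a b) (i : Fin a) :
    T.2 i = 1 ∨ T.2 i = 2 ∨ T.2 i = 3 ∨ T.2 i = 4 := by
  obtain ⟨-, h2, -⟩ := hT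
  have := h2 i
  omega

def updCol {a b : ℕ} (T : TabT a b) (j : Fin b) (c : ℕ × ℕ) : TabT a b :=
  (Function.update T.1 j c, T.2)

def updRow {a b : ℕ} (T : TabT a b) (i : Fin a) (v : ℕ) : TabT a b :=
  (T.1, Function.update T.2 i v)

lemma updCol_mem {a b : ℕ} {T : TabT a b} (hT : T ∈ SC2 a b) (j : Fin b) (c : ℕ × ℕ)
    (hc : 1 ≤ c.1 ∧ c.1 ≤ 4 ∧ 1 ≤ c.2 ∧ c.2 ≤ 4 ∧ c.1 < c.2)
    (hL : ∀ j', j' ≤ j → j' ≠ j → (T.1 j').1 ≤ c.1 ∧ (T.1 j').2 ≤ c.2)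
    (hR : ∀ j', j ≤ j' → j' ≠ j → c.1 ≤ (T.1 j').1 ∧ c.2 ≤ (T.1 j').2)
    (hrow : ∀ i, c.1 ≤ T.2 i)
    (h14 : c ≠ (1,4))
    (h23 : c = (2,3) → ∀ j', j' ≠ j → T.1 j' ≠ (2,3)) :
    updCol T j c ∈ SC2 a b := by
  obtain ⟨t1, t2, t3, t4, t5, t6, t7⟩ := hT
  refine ⟨?_, t2, ?_, t4, ?_, ?_, ?_⟩
  · intro j'
    by_cases h : j' = j
    · subst h; simpa [updCol] using hc
    · simpa [updCol, Function.update_of_ne h] using t1 j'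
  · intro j1 j2 hle
    by_cases h1 : j1 = j <;> by_cases h2 : j2 = j
    · subst h1; subst h2; simp [updCol]
    · subst h1
      have := hR j2 hle h2
      simpa [updCol, Function.update_of_ne h2] using this
    · subst h2
      have := hL j1 hle h1
      simpa [updCol, Function.update_of_ne h1] using this
    · simpa [updCol, Function.update_of_ne h1, Function.update_of_ne h2] using t3 j1 j2 hle
  · intro j' i
    by_cases h : j' = j
    · subst h; simpa [updCol] using hrow i
    · simpa [updCol, Function.update_of_ne h] using t5 j' i
  · intro j'
    by_cases h : j' = j
    · subst h; simpa [updCol] using h14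
    · simpa [updCol, Function.update_of_ne h] using t6 j'
  · intro j1 j2 hj1 hj2
    simp only [updCol] at hj1 hj2
    by_cases h1 : j1 = j <;> by_cases h2 : j2 = j
    · subst h1; subst h2; rfl
    · subst h1
      rw [Function.update_self] at hj1
      rw [Function.update_of_ne h2] at hj2
      exact absurd hj2 (h23 hj1 j2 h2)
    · subst h2
      rw [Function.update_self] at hj2
      rw [Function.update_of_ne h1] at hj1
      exact absurd hj1 (h23 hj2 j1 h1)
    · rw [Function.update_of_ne h1] at hj1
      rw [Function.update_of_ne h2] at hj2
      exact t7 j1 j2 hj1 hj2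

lemma updRow_mem {a b : ℕ} {T : TabT a b} (hT : T ∈ SC2 a b) (i : Fin a) (v : ℕ)
    (hv : 1 ≤ v ∧ v ≤ 4)
    (hL : ∀ i', i' ≤ i → i' ≠ i → T.2 i' ≤ v)
    (hR : ∀ i', i ≤ i' → i' ≠ i → v ≤ T.2 i')
    (hcol : ∀ j, (T.1 j).1 ≤ v) :
    updRow T i v ∈ SC2 a b := by
  obtain ⟨t1, t2, t3, t4, t5, t6, t7⟩ := hT
  refine ⟨t1, ?_, t3, ?_, ?_, t6, t7⟩
  · intro i'
    by_cases h : i' = i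
    · subst h; simpa [updRow] using hv
    · simpa [updRow, Function.update_of_ne h] using t2 i'
  · intro i1 i2 hle
    by_cases h1 : i1 = i <;> by_cases h2 : i2 = i
    · subst h1; subst h2; simp [updRow]
    · subst h1
      have := hR i2 hle h2
      simpa [updRow, Function.update_of_ne h2] using this
    · subst h2
      have := hL i1 hle h1
      simpa [updRow, Function.update_of_ne h1] using this
    · simpa [updRow, Function.update_of_ne h1, Function.update_of_ne h2] using t4 i1 i2 hle
  · intro j i'
    by_cases h : i' = i
    · subst h; simpa [updRow] using hcol j
    · simpa [updRow, Function.update_of_ne h] using t5 j i'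


/-! ### Step lemmas -/

lemma step_alpha {a b : ℕ} {S T : {T : TabT a b // T ∈ SC2 a b}}
    (h : covC2 a b TwoColor.alpha S T) :
    (pot fA gA S.1 : ℤ) + 1 = pot fA gA T.1 ∧
    (pot fB gB S.1 : ℤ) = pot fB gB T.1 + 1 ∧
    (pot fC gC S.1 : ℤ) - pot fD gD S.1 = (pot fC gC T.1 : ℤ) - pot fD gD T.1 + 1 := by
  obtain ⟨s1, s2, -, -, -, s6, -⟩ := S.2
  rcases h with ⟨j, hcolor, hSj, hoth, hrow⟩ | ⟨j, hcolor, hSj, hoth, hrow⟩ |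
    ⟨i, hcolor, hSi, hoth, hcol⟩
  · -- top entry raised
    have eA := pot_step_col fA gA S.1 T.1 j hoth hrow
    have eB := pot_step_col fB gB S.1 T.1 j hoth hrow
    have eC := pot_step_col fC gC S.1 T.1 j hoth hrow
    have eD := pot_step_col fD gD S.1 T.1 j hoth hrow
    rcases col_cases T.2 j with hc | hc | hc | hc | hc <;>
      rw [hc] at hSj hcolor <;> norm_num at hSj hcolor
    · have := s1 j; rw [hSj] at this; omega
    · rw [hc, hSj] at eA eB eC eD
      norm_num [fA, fB, fC, fD] at eA eB eC eD
      omega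
    · have := s1 j; rw [hSj] at this; omega
    · simp [colEntC2] at hcolor
    · have := s1 j; rw [hSj] at this; omega
  · -- bottom entry raised
    have eA := pot_step_col fA gA S.1 T.1 j hoth hrow
    have eB := pot_step_col fB gB S.1 T.1 j hoth hrow
    have eC := pot_step_col fC gC S.1 T.1 j hoth hrow
    have eD := pot_step_col fD gD S.1 T.1 j hoth hrow
    rcases col_cases T.2 j with hc | hc | hc | hc | hc <;>
      rw [hc] at hSj hcolor <;> norm_num at hSj hcolor
    · simp [colEntC2] at hcolor
    · exact absurd hSj (s6 j)
    · rw [hc, hSj] at eA eB eC eD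
      norm_num [fA, fB, fC, fD] at eA eB eC eD
      omega
    · have := s1 j; rw [hSj] at this; omega
    · have := s1 j; rw [hSj] at this; omega
  · -- row entry raised
    have eA := pot_step_row fA gA S.1 T.1 i hoth hcol
    have eB := pot_step_row fB gB S.1 T.1 i hoth hcol
    have eC := pot_step_row fC gC S.1 T.1 i hoth hcol
    have eD := pot_step_row fD gD S.1 T.1 i hoth hcol
    rcases row_cases T.2 i with hc | hc | hc | hc <;>
      rw [hc] at hSi hcolor <;> norm_num at hSi hcolor
    · rw [hc, hSi] at eA eB eC eD
      norm_num [gA, gB, gC, gD] at eA eB eC eD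
      omega
    · simp [colEntC2] at hcolor
    · rw [hc, hSi] at eA eB eC eD
      norm_num [gA, gB, gC, gD] at eA eB eC eD
      omega
    · have := s2 i; rw [hSi] at this; omega

lemma step_beta {a b : ℕ} {S T : {T : TabT a b // T ∈ SC2 a b}}
    (h : covC2 a b TwoColor.beta S T) :
    (pot fC gC S.1 : ℤ) + 1 = pot fC gC T.1 ∧
    (pot fD gD S.1 : ℤ) = pot fD gD T.1 + 1 ∧
    (pot fA gA S.1 : ℤ) - pot fB gB S.1 = (pot fA gA T.1 : ℤ) - pot fB gB T.1 + 2 := by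
  obtain ⟨s1, s2, -, -, -, s6, -⟩ := S.2
  rcases h with ⟨j, hcolor, hSj, hoth, hrow⟩ | ⟨j, hcolor, hSj, hoth, hrow⟩ |
    ⟨i, hcolor, hSi, hoth, hcol⟩
  · -- top entry raised
    have eA := pot_step_col fA gA S.1 T.1 j hoth hrow
    have eB := pot_step_col fB gB S.1 T.1 j hoth hrow
    have eC := pot_step_col fC gC S.1 T.1 j hoth hrow
    have eD := pot_step_col fD gD S.1 T.1 j hoth hrow
    rcases col_cases T.2 j with hc | hc | hc | hc | hc <;>
      rw [hc] at hSj hcolor <;> norm_num at hSj hcolor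
    · have := s1 j; rw [hSj] at this; omega
    · simp [colEntC2] at hcolor
    · have := s1 j; rw [hSj] at this; omega
    · rw [hc, hSj] at eA eB eC eD
      norm_num [fA, fB, fC, fD] at eA eB eC eD
      omega
    · have := s1 j; rw [hSj] at this; omega
  · -- bottom entry raised
    have eA := pot_step_col fA gA S.1 T.1 j hoth hrow
    have eB := pot_step_col fB gB S.1 T.1 j hoth hrow
    have eC := pot_step_col fC gC S.1 T.1 j hoth hrow
    have eD := pot_step_col fD gD S.1 T.1 j hoth hrow
    rcases col_cases T.2 j with hc | hc | hc | hc | hc <;>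
      rw [hc] at hSj hcolor <;> norm_num at hSj hcolor
    · rw [hc, hSj] at eA eB eC eD
      norm_num [fA, fB, fC, fD] at eA eB eC eD
      omega
    · exact absurd hSj (s6 j)
    · simp [colEntC2] at hcolor
    · have := s1 j; rw [hSj] at this; omega
    · have := s1 j; rw [hSj] at this; omega
  · -- row entry raised
    have eA := pot_step_row fA gA S.1 T.1 i hoth hcol
    have eB := pot_step_row fB gB S.1 T.1 i hoth hcol
    have eC := pot_step_row fC gC S.1 T.1 i hoth hcol
    have eD := pot_step_row fD gD S.1 T.1 i hoth hcol
    rcases row_cases T.2 i with hc | hc | hc | hc <;>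
      rw [hc] at hSi hcolor <;> norm_num at hSi hcolor
    · simp [colEntC2] at hcolor
    · rw [hc, hSi] at eA eB eC eD
      norm_num [gA, gB, gC, gD] at eA eB eC eD
      omega
    · simp [colEntC2] at hcolor
    · have := s2 i; rw [hSi] at this; omega


/-! ### Existence of moves -/

lemma prodEq {p : ℕ × ℕ} {x y : ℕ} (h1 : p.1 = x) (h2 : p.2 = y) : p = (x, y) := by
  cases p; simp_all

lemma exists_max_fin {m : ℕ} (P : Fin m → Prop) [DecidablePred P] (h : ∃ j, P j) :
    ∃ j, P j ∧ ∀ j', P j' → j' ≤ j := by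
  obtain ⟨j0, hj0⟩ := h
  have hne : (Finset.univ.filter P).Nonempty := ⟨j0, by simp [hj0]⟩
  refine ⟨(Finset.univ.filter P).max' hne, ?_, ?_⟩
  · have := Finset.max'_mem _ hne; simpa using this
  · intro j' hj'; exact Finset.le_max' _ _ (by simp [hj'])

lemma exists_min_fin {m : ℕ} (P : Fin m → Prop) [DecidablePred P] (h : ∃ j, P j) :
    ∃ j, P j ∧ ∀ j', P j' → j ≤ j' := by
  obtain ⟨j0, hj0⟩ := h
  have hne : (Finset.univ.filter P).Nonempty := ⟨j0, by simp [hj0]⟩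
  refine ⟨(Finset.univ.filter P).min' hne, ?_, ?_⟩
  · have := Finset.min'_mem _ hne; simpa using this
  · intro j' hj'; exact Finset.min'_le _ _ (by simp [hj'])

lemma raise_row {a b : ℕ} (T : {T : TabT a b // T ∈ SC2 a b}) (i : Fin a) (v : ℕ)
    (hv : T.1.2 i = v) (hv3 : v ≤ 3)
    (hmax : ∀ i', T.1.2 i' = v → i' ≤ i) :
    ∃ S, covC2 a b (colEntC2 v) S T := by
  obtain ⟨t1, t2, t3, t4, t5, t6, t7⟩ := T.2
  have hv1 : 1 ≤ v := by have := t2 i; omega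
  refine ⟨⟨updRow T.1 i (v+1), updRow_mem T.2 i (v+1) (by omega) ?_ ?_ ?_⟩,
    Or.inr (Or.inr ⟨i, by rw [hv], ?_, ?_, rfl⟩)⟩
  · intro i' hle _; have := t4 i' i hle; omega
  · intro i' hle hne
    have h1 := t4 i i' hle
    have h2 := t2 i'
    have hne' : T.1.2 i' ≠ v := fun hh => hne (le_antisymm (hmax i' hh) hle)
    omega
  · intro j; have := t5 j i; omega
  · simp [updRow, hv]
  · intro i' hne; simp [updRow, Function.update_of_ne hne]

lemma lower_row {a b : ℕ} (T : {T : TabT a b // T ∈ SC2 a b}) (i : Fin a) (v : ℕ)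
    (hv : T.1.2 i = v) (hv2 : 2 ≤ v) (hv4 : v ≤ 4)
    (hmin : ∀ i', T.1.2 i' = v → i ≤ i')
    (hcol : ∀ j, (T.1.1 j).1 ≤ v - 1) :
    ∃ S, covC2 a b (colEntC2 (v-1)) T S := by
  obtain ⟨t1, t2, t3, t4, t5, t6, t7⟩ := T.2
  refine ⟨⟨updRow T.1 i (v-1), updRow_mem T.2 i (v-1) (by omega) ?_ ?_ hcol⟩,
    Or.inr (Or.inr ⟨i, ?_, ?_, ?_, rfl⟩)⟩
  · intro i' hle hne
    have h1 := t4 i' i hle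
    have hne' : T.1.2 i' ≠ v := fun hh => hne (le_antisymm hle (hmin i' hh))
    omega
  · intro i' hle _; have := t4 i i' hle; omega
  · simp [updRow]
  · simp [updRow, hv]; omega
  · intro i' hne; simp [updRow, Function.update_of_ne hne]

lemma exists_up_alpha {a b : ℕ} (T : {T : TabT a b // T ∈ SC2 a b})
    (h : 0 < pot fA gA T.1) : ∃ S, covC2 a b TwoColor.alpha S T := by
  classical
  obtain ⟨t1, t2, t3, t4, t5, t6, t7⟩ := T.2
  by_cases h3 : ∃ i, T.1.2 i = 3
  · obtain ⟨i, hi, hmax⟩ := exists_max_fin _ h3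
    simpa [colEntC2] using raise_row T i 3 hi (by omega) hmax
  · by_cases hy3 : ∃ j, (T.1.1 j).2 = 3
    · obtain ⟨j, hj, hmax⟩ := exists_max_fin _ hy3
      by_cases hx2 : (T.1.1 j).1 = 2
      · -- column (2,3) -> (2,4), an alpha move on the bottom entry
        refine ⟨⟨updCol T.1 j (2,4), updCol_mem T.2 j (2,4) (by norm_num) ?_ ?_ ?_
          (by norm_num) (by simp)⟩, Or.inr (Or.inl ⟨j, ?_, ?_, ?_, rfl⟩)⟩
        · intro j' hle _
          have h1 := t3 j' j hle
          have h2 := t1 j'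
          omega
        · intro j' hle hne
          have h1 := t3 j j' hle
          have h2 := t1 j'
          have hne3 : (T.1.1 j').2 ≠ 3 := fun hh => hne (le_antisymm (hmax j' hh) hle)
          omega
        · intro i; have := t5 j i; omega
        · simp [colEntC2, hj]
        · have hTj : T.1.1 j = (2,3) := prodEq hx2 hj
          simp [updCol, hTj]
        · intro j' hne; simp [updCol, Function.update_of_ne hne]
      · have hx1 : (T.1.1 j).1 = 1 := by have := t1 j; omega
        by_cases hr1 : ∃ i, T.1.2 i = 1
        · obtain ⟨i, hi, hmax'⟩ := exists_max_fin _ hr1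
          simpa [colEntC2] using raise_row T i 1 hi (by omega) hmax'
        · -- column (1,3) -> (2,3), an alpha move on the top entry
          push_neg at hr1 h3
          refine ⟨⟨updCol T.1 j (2,3), updCol_mem T.2 j (2,3) (by norm_num) ?_ ?_ ?_
            (by norm_num) ?_⟩, Or.inl ⟨j, ?_, ?_, ?_, rfl⟩⟩
          · intro j' hle _
            have h1 := t3 j' j hle
            have h2 := t1 j'
            omega
          · intro j' hle hne
            have h1 := t3 j j' hle
            have h2 := t1 j'
            have hne3 : (T.1.1 j').2 ≠ 3 := fun hh => hne (le_antisymm (hmax j' hh) hle)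
            have h14 := t6 j'
            constructor
            · by_contra hcon
              push_neg at hcon
              have hx1' : (T.1.1 j').1 = 1 := by omega
              exact h14 (prodEq hx1' (by omega))
            · omega
          · intro i
            have h1 := t2 i
            have h2 := hr1 i
            omega
          · intro _ j' hne hcon
            have hy' : (T.1.1 j').2 = 3 := by rw [hcon]
            have hle := hmax j' hy'
            have h1 := t3 j' j hle
            rw [hcon] at h1
            omega
          · simp [colEntC2, hx1]
          · have hTj : T.1.1 j = (1,3) := prodEq hx1 hj
            simp [updCol, hTj]
          · intro j' hne; simp [updCol, Function.update_of_ne hne]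
    · by_cases hr1 : ∃ i, T.1.2 i = 1
      · obtain ⟨i, hi, hmax'⟩ := exists_max_fin _ hr1
        simpa [colEntC2] using raise_row T i 1 hi (by omega) hmax'
      · exfalso
        push_neg at h3 hy3 hr1
        have hcol0 : ∀ j, fA (T.1.1 j) = 0 := by
          intro j
          have hy := hy3 j
          rcases col_cases T.2 j with hc|hc|hc|hc|hc <;> rw [hc] at hy ⊢ <;>
            simp [fA] at hy ⊢
        have hrow0 : ∀ i, gA (T.1.2 i) = 0 := by
          intro i
          have h1 := hr1 i
          have h2 := h3 i
          simp [gA]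
          omega
        have hz : pot fA gA T.1 = 0 := by
          unfold pot
          rw [Finset.sum_eq_zero (fun j _ => hcol0 j), Finset.sum_eq_zero (fun i _ => hrow0 i)]
          norm_num
        omega



lemma exists_down_alpha {a b : ℕ} (T : {T : TabT a b // T ∈ SC2 a b})
    (h : 0 < pot fB gB T.1) : ∃ S, covC2 a b TwoColor.alpha T S := by
  classical
  obtain ⟨t1, t2, t3, t4, t5, t6, t7⟩ := T.2
  by_cases hx2 : ∃ j, (T.1.1 j).1 = 2
  · obtain ⟨j, hj, hmin⟩ := exists_min_fin _ hx2
    have hy := t1 j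
    by_cases hy3 : (T.1.1 j).2 = 3
    · -- column (2,3) -> (1,3)
      refine ⟨⟨updCol T.1 j (1,3), updCol_mem T.2 j (1,3) (by norm_num) ?_ ?_ ?_
        (by norm_num) (by simp)⟩, Or.inl ⟨j, by simp [updCol, colEntC2], ?_, ?_, rfl⟩⟩
      · intro j' hle hne
        have h1 := t3 j' j hle
        have h2 := t1 j'
        have hne2 : (T.1.1 j').1 ≠ 2 := fun hh => hne (le_antisymm hle (hmin j' hh))
        omega
      · intro j' hle _
        have h1 := t3 j j' hle
        have h2 := t1 j'
        omega
      · intro i; have := t2 i; omega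
      · simp only [updCol, Function.update_self]
        exact prodEq hj hy3
      · intro j' hne; simp [updCol, Function.update_of_ne hne]
    · have hy4 : (T.1.1 j).2 = 4 := by omega
      -- column (2,4) -> (2,3)
      refine ⟨⟨updCol T.1 j (2,3), updCol_mem T.2 j (2,3) (by norm_num) ?_ ?_ ?_
        (by norm_num) ?_⟩, Or.inr (Or.inl ⟨j, by simp [updCol, colEntC2], ?_, ?_, rfl⟩)⟩
      · intro j' hle hne
        have h1 := t3 j' j hle
        have h2 := t1 j'
        have hne2 : (T.1.1 j').1 ≠ 2 := fun hh => hne (le_antisymm hle (hmin j' hh))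
        have h14 := t6 j'
        constructor
        · omega
        · by_contra hcon
          push_neg at hcon
          exact h14 (prodEq (by omega) (by omega))
      · intro j' hle _
        have h1 := t3 j j' hle
        have h2 := t1 j'
        omega
      · intro i; have h1 := t5 j i; omega
      · intro _ j' hne hcon
        have hx' : (T.1.1 j').1 = 2 := by rw [hcon]
        have hy' : (T.1.1 j').2 = 3 := by rw [hcon]
        have hle := hmin j' hx'
        have h1 := t3 j j' hle
        omega
      · simp only [updCol, Function.update_self]
        exact prodEq hj hy4
      · intro j' hne; simp [updCol, Function.update_of_ne hne]
  · by_cases hr4 : ∃ i, T.1.2 i = 4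
    · obtain ⟨i, hi, hmin⟩ := exists_min_fin _ hr4
      have := lower_row T i 4 hi (by omega) (by omega) hmin (fun j => by have := t1 j; omega)
      simpa [colEntC2] using this
    · by_cases hr2 : ∃ i, T.1.2 i = 2
      · obtain ⟨i, hi, hmin⟩ := exists_min_fin _ hr2
        push_neg at hx2
        have := lower_row T i 2 hi (by omega) (by omega) hmin
          (fun j => by have h1 := t5 j i; have h2 := hx2 j; omega)
        simpa [colEntC2] using this
      · exfalso
        push_neg at hx2 hr4 hr2
        have hcol0 : ∀ j, fB (T.1.1 j) = 0 := by
          intro j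
          have hx := hx2 j
          rcases col_cases T.2 j with hc|hc|hc|hc|hc <;> rw [hc] at hx ⊢ <;>
            simp [fB] at hx ⊢
        have hrow0 : ∀ i, gB (T.1.2 i) = 0 := by
          intro i
          have h1 := hr2 i
          have h2 := hr4 i
          simp [gB]
          omega
        have hz : pot fB gB T.1 = 0 := by
          unfold pot
          rw [Finset.sum_eq_zero (fun j _ => hcol0 j), Finset.sum_eq_zero (fun i _ => hrow0 i)]
          norm_num
        omega

lemma exists_up_beta {a b : ℕ} (T : {T : TabT a b // T ∈ SC2 a b})
    (h : 0 < pot fC gC T.1) : ∃ S, covC2 a b TwoColor.beta S T := by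
  classical
  obtain ⟨t1, t2, t3, t4, t5, t6, t7⟩ := T.2
  by_cases hr2 : ∃ i, T.1.2 i = 2
  · obtain ⟨i, hi, hmax⟩ := exists_max_fin _ hr2
    simpa [colEntC2] using raise_row T i 2 hi (by omega) hmax
  · by_cases h24 : ∃ j, (T.1.1 j).1 = 2 ∧ (T.1.1 j).2 = 4
    · obtain ⟨j1, hj1⟩ := h24
      obtain ⟨j, hj, hmax⟩ := exists_max_fin (fun j => (T.1.1 j).1 = 2) ⟨j1, hj1.1⟩
      have hy4 : (T.1.1 j).2 = 4 := by
        have h1 := t3 j1 j (hmax j1 hj1.1)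
        have h2 := t1 j
        omega
      push_neg at hr2
      -- column (2,4) -> (3,4)
      refine ⟨⟨updCol T.1 j (3,4), updCol_mem T.2 j (3,4) (by norm_num) ?_ ?_ ?_
        (by norm_num) (by simp)⟩, Or.inl ⟨j, by simp [colEntC2, hj], ?_, ?_, rfl⟩⟩
      · intro j' hle _
        have h1 := t3 j' j hle
        have h2 := t1 j'
        omega
      · intro j' hle hne
        have h1 := t3 j j' hle
        have h2 := t1 j'
        have hne2 : (T.1.1 j').1 ≠ 2 := fun hh => hne (le_antisymm (hmax j' hh) hle)
        omega
      · intro i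
        have h1 := t5 j i
        have h2 := hr2 i
        have h3 := t2 i
        omega
      · have hTj : T.1.1 j = (2,4) := prodEq hj hy4
        simp [updCol, hTj]
      · intro j' hne; simp [updCol, Function.update_of_ne hne]
    · by_cases hy2 : ∃ j, (T.1.1 j).2 = 2
      · obtain ⟨j, hj, hmax⟩ := exists_max_fin _ hy2
        have hx1 : (T.1.1 j).1 = 1 := by have := t1 j; omega
        -- column (1,2) -> (1,3)
        refine ⟨⟨updCol T.1 j (1,3), updCol_mem T.2 j (1,3) (by norm_num) ?_ ?_ ?_
          (by norm_num) (by simp)⟩, Or.inr (Or.inl ⟨j, by simp [colEntC2, hj], ?_, ?_, rfl⟩)⟩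
        · intro j' hle _
          have h1 := t3 j' j hle
          omega
        · intro j' hle hne
          have h1 := t3 j j' hle
          have h2 := t1 j'
          have hne2 : (T.1.1 j').2 ≠ 2 := fun hh => hne (le_antisymm (hmax j' hh) hle)
          omega
        · intro i; have := t2 i; omega
        · have hTj : T.1.1 j = (1,2) := prodEq hx1 hj
          simp [updCol, hTj]
        · intro j' hne; simp [updCol, Function.update_of_ne hne]
      · exfalso
        push_neg at hr2 h24 hy2
        have hcol0 : ∀ j, fC (T.1.1 j) = 0 := by
          intro j
          have hx := h24 j
          have hy := hy2 j
          rcases col_cases T.2 j with hc|hc|hc|hc|hc <;> rw [hc] at hx hy ⊢ <;>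
            simp [fC] at hx hy ⊢
        have hrow0 : ∀ i, gC (T.1.2 i) = 0 := by
          intro i
          have h1 := hr2 i
          simp [gC]
          omega
        have hz : pot fC gC T.1 = 0 := by
          unfold pot
          rw [Finset.sum_eq_zero (fun j _ => hcol0 j), Finset.sum_eq_zero (fun i _ => hrow0 i)]
          norm_num
        omega

lemma exists_down_beta {a b : ℕ} (T : {T : TabT a b // T ∈ SC2 a b})
    (h : 0 < pot fD gD T.1) : ∃ S, covC2 a b TwoColor.beta T S := by
  classical
  obtain ⟨t1, t2, t3, t4, t5, t6, t7⟩ := T.2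
  by_cases hx3 : ∃ j, (T.1.1 j).1 = 3
  · obtain ⟨j, hj, hmin⟩ := exists_min_fin _ hx3
    have hy4 : (T.1.1 j).2 = 4 := by have := t1 j; omega
    -- column (3,4) -> (2,4)
    refine ⟨⟨updCol T.1 j (2,4), updCol_mem T.2 j (2,4) (by norm_num) ?_ ?_ ?_
      (by norm_num) (by simp)⟩, Or.inl ⟨j, by simp [updCol, colEntC2], ?_, ?_, rfl⟩⟩
    · intro j' hle hne
      have h1 := t3 j' j hle
      have h2 := t1 j'
      have hne3 : (T.1.1 j').1 ≠ 3 := fun hh => hne (le_antisymm hle (hmin j' hh))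
      omega
    · intro j' hle _
      have h1 := t3 j j' hle
      have h2 := t1 j'
      omega
    · intro i; have := t5 j i; omega
    · simp only [updCol, Function.update_self]
      exact prodEq hj hy4
    · intro j' hne; simp [updCol, Function.update_of_ne hne]
  · by_cases hr3 : ∃ i, T.1.2 i = 3
    · obtain ⟨i, hi, hmin⟩ := exists_min_fin _ hr3
      push_neg at hx3
      have := lower_row T i 3 hi (by omega) (by omega) hmin
        (fun j => by have h1 := t5 j i; have h2 := hx3 j; omega)
      simpa [colEntC2] using this
    · by_cases h13 : ∃ j, (T.1.1 j).1 = 1 ∧ (T.1.1 j).2 = 3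
      · obtain ⟨j1, hj1⟩ := h13
        obtain ⟨j, hj, hmin⟩ := exists_min_fin (fun j => (T.1.1 j).2 = 3) ⟨j1, hj1.2⟩
        have hx1 : (T.1.1 j).1 = 1 := by
          have h1 := t3 j j1 (hmin j1 hj1.2)
          have h2 := t1 j
          omega
        -- column (1,3) -> (1,2)
        refine ⟨⟨updCol T.1 j (1,2), updCol_mem T.2 j (1,2) (by norm_num) ?_ ?_ ?_
          (by norm_num) (by simp)⟩, Or.inr (Or.inl ⟨j, by simp [updCol, colEntC2], ?_, ?_, rfl⟩)⟩
        · intro j' hle hne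
          have h1 := t3 j' j hle
          have h2 := t1 j'
          have hne3 : (T.1.1 j').2 ≠ 3 := fun hh => hne (le_antisymm hle (hmin j' hh))
          omega
        · intro j' hle _
          have h1 := t3 j j' hle
          have h2 := t1 j'
          omega
        · intro i; have := t2 i; omega
        · simp only [updCol, Function.update_self]
          exact prodEq hx1 hj
        · intro j' hne; simp [updCol, Function.update_of_ne hne]
      · exfalso
        push_neg at hx3 hr3 h13
        have hcol0 : ∀ j, fD (T.1.1 j) = 0 := by
          intro j
          have hx := hx3 j
          have hy := h13 j
          rcases col_cases T.2 j with hc|hc|hc|hc|hc <;> rw [hc] at hx hy ⊢ <;>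
            simp [fD] at hx hy ⊢
        have hrow0 : ∀ i, gD (T.1.2 i) = 0 := by
          intro i
          have h1 := hr3 i
          simp [gD]
          omega
        have hz : pot fD gD T.1 = 0 := by
          unfold pot
          rw [Finset.sum_eq_zero (fun j _ => hcol0 j), Finset.sum_eq_zero (fun i _ => hrow0 i)]
          norm_num
        omega

/-- For all `a, b ≥ 0`, the edge-colored distributive lattice `L_C2(a,b)` of
`C2`-semistandard tableaux of shape `(a,b)` satisfies the structure condition for
the `C2` Cartan matrix with rows `M_α = (2,−1)`, `M_β = (−2,2)`. -/
theorem C2_lattice_structure_condition (a b : ℕ) :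
    StructureCondition (covC2 a b) MC2 := by
  intro γ S T hST
  have rA : ∀ U : {T : TabT a b // T ∈ SC2 a b},
      rhoOf (covC2 a b TwoColor.alpha) U = pot fA gA U.1 :=
    rho_eq _ _ (fun s u hc => by exact_mod_cast (step_alpha hc).1) exists_up_alpha
  have dA : ∀ U : {T : TabT a b // T ∈ SC2 a b},
      deltaOf (covC2 a b TwoColor.alpha) U = pot fB gB U.1 :=
    delta_eq _ _ (fun s u hc => by exact_mod_cast ((step_alpha hc).2.1).symm) exists_down_alpha
  have rB : ∀ U : {T : TabT a b // T ∈ SC2 a b},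
      rhoOf (covC2 a b TwoColor.beta) U = pot fC gC U.1 :=
    rho_eq _ _ (fun s u hc => by exact_mod_cast (step_beta hc).1) exists_up_beta
  have dB : ∀ U : {T : TabT a b // T ∈ SC2 a b},
      deltaOf (covC2 a b TwoColor.beta) U = pot fD gD U.1 :=
    delta_eq _ _ (fun s u hc => by exact_mod_cast ((step_beta hc).2.1).symm) exists_down_beta
  unfold wtOf
  rw [rA S, rA T, dA S, dA T, rB S, rB T, dB S, dB T]
  cases γ with
  | alpha =>
    have h1 := (step_alpha hST).1
    have h2 := (step_alpha hST).2.1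
    have h3 := (step_alpha hST).2.2
    simp only [MC2, Prod.mk_add_mk, Prod.mk.injEq]
    constructor <;> omega
  | beta =>
    have h1 := (step_beta hST).1
    have h2 := (step_beta hST).2.1
    have h3 := (step_beta hST).2.2
    simp only [MC2, Prod.mk_add_mk, Prod.mk.injEq]
    constructor <;> omega
end
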